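/- arXiv:1906.11030 — 6 statements merged into one kernel-verified Lean document; each statement's English description precedes it below -/
import Mathlib

section
/- Property P1 implies property P2: if a string U over Σ∪{#} satisfies P1 (t-chain equivalence I_W ≡ I_U), then for every length-k string P over Σ that is not a sensitive pattern, Freq_U(P) = Freq_W(P). -/
/-- Number of occurrences (starting positions) of `P` as a substring of `T`. -/
def strFreq {α : Type*} [DecidableEq α] (T P : List α) : ℕ :=
  ((Finset.range (T.length + 1 - P.length)).filter
    (fun i => (T.drop i).take P.length = P)).card

/-- Strings over `Σ ∪ {#}` are modelled as lists over `Option α`, where `none` is the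
separator `#` and `some a` (for `a : α`) is a letter of `Σ`.
`IUset W S k U` is the set `I_U` of positions `i` of `U` such that `U[i..i+k−1]` is a
length-`k` string over `Σ` which is not a sensitive pattern (a sensitive pattern being a
string of the form `W[j..j+k−1]` with `j ∈ S`). -/
def IUset {α : Type*} [DecidableEq α] (W : List α) (S : Finset ℕ) (k : ℕ)
    (U : List (Option α)) : Finset ℕ :=
  (Finset.range (U.length + 1 - k)).filter (fun i =>
    (∀ x ∈ (U.drop i).take k, x ≠ none) ∧
    ¬ ∃ j ∈ S, ((U.drop i).take k).reduceOption = (W.drop j).take k)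

/-- Property C1: no sensitive pattern occurs in `U`. -/
def PropC1 {α : Type*} [DecidableEq α] (W : List α) (S : Finset ℕ) (k : ℕ)
    (U : List (Option α)) : Prop :=
  ∀ j ∈ S, ¬ ((((W.drop j).take k).map some) <:+: U)

/-- Property P1 (t-chain equivalence `I_W ≡ I_U`): the two sets of positions have the same
cardinality and, for every `j`, the length-`k` substring of `U` at the `j`-th smallest
position of `I_U` equals the length-`k` substring of `W` at the `j`-th smallest position
of `I_W`. -/
def PropP1 {α : Type*} [DecidableEq α] (W : List α) (S : Finset ℕ) (k : ℕ)
    (U : List (Option α)) : Prop :=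
  (IUset W S k (W.map some)).card = (IUset W S k U).card ∧
  ∀ j < (IUset W S k (W.map some)).card,
    (U.drop (((IUset W S k U).sort (· ≤ ·)).getD j 0)).take k =
    ((W.map some).drop (((IUset W S k (W.map some)).sort (· ≤ ·)).getD j 0)).take k

/-- Property P2: every length-`k` string over `Σ` that is not a sensitive pattern occurs
equally often in `U` and in `W`. -/
def PropP2 {α : Type*} [DecidableEq α] (W : List α) (S : Finset ℕ) (k : ℕ)
    (U : List (Option α)) : Prop :=
  ∀ P : List α, P.length = k → (∀ j ∈ S, P ≠ (W.drop j).take k) →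
    strFreq U (P.map some) = strFreq W P

/-- `i` is the p-predecessor of `j` in the set of positions `F` (w.r.t. the string `U`):
`i` is the largest element of `F` smaller than `j`, and the length-`k` substrings of `U`
at `i` and `j` have a suffix-prefix overlap of length `k−1`. -/
def IsPPred {α : Type*} (U : List (Option α)) (k : ℕ) (F : Finset ℕ) (i j : ℕ) : Prop :=
  i ∈ F ∧ j ∈ F ∧ i < j ∧ (∀ m ∈ F, m < j → m ≤ i) ∧
  (U.drop (i + 1)).take (k - 1) = (U.drop j).take (k - 1)

/-- A p-chain of `F`: a subset `J ⊆ F` such that every element of `J` other than its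
minimum has its p-predecessor in `J`. -/
def IsPChain {α : Type*} (U : List (Option α)) (k : ℕ) (F : Finset ℕ)
    (J : Finset ℕ) : Prop :=
  J ⊆ F ∧ ∀ x ∈ J, (∀ y ∈ J, x ≤ y) ∨ ∃ i ∈ J, IsPPred U k F i x

/-- Equivalence of chains: same cardinality, and position-wise (in increasing order) the
length-`k` substrings agree. -/
def ChainEquiv {α : Type*} [DecidableEq α] (U V : List (Option α)) (k : ℕ)
    (JU JV : Finset ℕ) : Prop :=
  JU.card = JV.card ∧
  ∀ j < JU.card,
    (U.drop ((JU.sort (· ≤ ·)).getD j 0)).take k =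
    (V.drop ((JV.sort (· ≤ ·)).getD j 0)).take k

/-- Property Π1: there is an injective map from the p-chains of `I_W` to the p-chains of
`I_U` sending every p-chain to an equivalent one. -/
def PropPi1 {α : Type*} [DecidableEq α] (W : List α) (S : Finset ℕ) (k : ℕ)
    (U : List (Option α)) : Prop :=
  ∃ f : {J : Finset ℕ // IsPChain (W.map some) k (IUset W S k (W.map some)) J} →
        {J : Finset ℕ // IsPChain U k (IUset W S k U) J},
    Function.Injective f ∧
    ∀ J, ChainEquiv (W.map some) U k J.1 (f J).1

lemma reduceOption_map_some {α : Type*} (l : List α) : (l.map some).reduceOption = l := by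
  induction l <;> simp [*]

lemma card_filter_eq_countP (F : Finset ℕ) (p : ℕ → Prop) [DecidablePred p] :
    (F.filter p).card = (F.sort (· ≤ ·)).countP (fun i => decide (p i)) := by
  rw [(F.sort_perm_toList (· ≤ ·)).countP_eq]
  rw [← Multiset.coe_countP, Finset.coe_toList]
  rw [Finset.card, Finset.filter_val, ← Multiset.countP_eq_card_filter]

/-- property P1 implies property P2. Here `W` is a string of length `n` over
the finite alphabet `Σ = α`, `0 < k < n`, and `S ⊆ {0,…,n−k}` (the set of occurrences of
sensitive patterns) is closed under pattern equality. If a string `U` over `Σ ∪ {#}`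
satisfies P1, then for every length-`k` string `P` over `Σ` that is not a sensitive
pattern, `Freq_U(P) = Freq_W(P)`. -/
theorem stmt3 {α : Type*} [Fintype α] [DecidableEq α] (W : List α) (n k : ℕ)
    (hn : W.length = n) (hk0 : 0 < k) (hkn : k < n)
    (S : Finset ℕ) (hSrange : ∀ i ∈ S, i ≤ n - k)
    (hSclosed : ∀ i ∈ S, ∀ j, j ≤ n - k →
      (W.drop j).take k = (W.drop i).take k → j ∈ S)
    (U : List (Option α)) (hP1 : PropP1 W S k U) :
    PropP2 W S k U := by
  obtain ⟨hcard, hsub⟩ := hP1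
  intro P hPlen hPns
  classical
  set Pm : List (Option α) := P.map some with hPm
  have hPmlen : Pm.length = k := by simp [hPm, hPlen]
  set F := IUset W S k U with hF
  set G := IUset W S k (W.map some) with hG
  have h1 : strFreq U Pm = (F.filter (fun i => (U.drop i).take k = Pm)).card := by
    rw [hF, IUset, Finset.filter_filter, strFreq]
    simp only [hPmlen]
    apply congrArg Finset.card
    ext i
    simp only [Finset.mem_filter, Finset.mem_range]
    constructor
    · rintro ⟨hi, h⟩
      refine ⟨hi, ⟨?_, ?_⟩, h⟩
      · intro x hx
        rw [h] at hx
        simp only [hPm, List.mem_map] at hx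
        rcases hx with ⟨a, _, rfl⟩
        simp
      · rw [h, hPm, reduceOption_map_some]
        rintro ⟨j, hj, hje⟩
        exact hPns j hj hje
    · rintro ⟨hi, _, h⟩; exact ⟨hi, h⟩
  have hms : ∀ i, ((W.map some).drop i).take k = ((W.drop i).take k).map some := by
    intro i; rw [← List.map_drop, ← List.map_take]
  have hinj : ∀ a b : List α, a.map some = b.map some ↔ a = b :=
    fun a b => (List.map_injective_iff.mpr (Option.some_injective α)).eq_iff
  have h2 : strFreq W P = (G.filter (fun i => ((W.map some).drop i).take k = Pm)).card := by
    rw [hG, IUset, Finset.filter_filter, strFreq]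
    simp only [hPlen, List.length_map]
    apply congrArg Finset.card
    ext i
    simp only [Finset.mem_filter, Finset.mem_range, hms i, hPm, hinj]
    constructor
    · rintro ⟨hi, h⟩
      refine ⟨hi, ⟨?_, ?_⟩, h⟩
      · intro x hx
        simp only [List.mem_map] at hx
        rcases hx with ⟨a, _, rfl⟩
        simp
      · rw [reduceOption_map_some, h]
        rintro ⟨j, hj, hje⟩
        exact hPns j hj hje
    · rintro ⟨hi, _, h⟩; exact ⟨hi, h⟩
  set lU := F.sort (· ≤ ·) with hlU
  set lW := G.sort (· ≤ ·) with hlW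
  have hlenU : lU.length = F.card := Finset.length_sort _
  have hlenW : lW.length = G.card := Finset.length_sort _
  have hmap : lU.map (fun i => (U.drop i).take k) =
      lW.map (fun i => ((W.map some).drop i).take k) := by
    apply List.ext_getElem
    · simp [hlenU, hlenW, hcard]
    · intro j hj1 hj2
      simp only [List.getElem_map]
      have hjU : j < lU.length := by simpa using hj1
      have hjW : j < lW.length := by simpa using hj2
      have hjG : j < G.card := hlenW ▸ hjW
      have := hsub j hjG
      rwa [List.getD_eq_getElem _ _ hjU, List.getD_eq_getElem _ _ hjW] at this
  have e1 : (F.filter (fun i => (U.drop i).take k = Pm)).card =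
      (lU.map (fun i => (U.drop i).take k)).count Pm := by
    rw [card_filter_eq_countP, List.count, List.countP_map]
    apply List.countP_congr
    intro a _
    simp only [Function.comp_apply]
    rw [Bool.eq_iff_iff]
    simp
  have e2 : (G.filter (fun i => ((W.map some).drop i).take k = Pm)).card =
      (lW.map (fun i => ((W.map some).drop i).take k)).count Pm := by
    rw [card_filter_eq_countP, List.count, List.countP_map]
    apply List.countP_congr
    intro a _
    simp only [Function.comp_apply]
    rw [Bool.eq_iff_iff]
    simp
  rw [h1, h2, e1, e2, hmap]
end

section
/- Property P1 implies property Π1: if a string U over Σ∪{#} satisfies P1 (t-chain equivalence I_W ≡ I_U), then there exists an injective function f from the p-chains of I_W to the p-chains of I_U such that f(J) is equivalent to J for every p-chain J of I_W. -/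
private lemma sort_getD_mem (A : Finset ℕ) {j : ℕ} (hj : j < A.card) :
    (A.sort (· ≤ ·)).getD j 0 ∈ A := by
  have hl : j < (A.sort (· ≤ ·)).length := by rwa [Finset.length_sort]
  rw [List.getD_eq_getElem _ _ hl]
  exact (Finset.mem_sort _).1 (List.getElem_mem hl)

private lemma sort_getD_lt (A : Finset ℕ) {i j : ℕ} (hij : i < j) (hj : j < A.card) :
    (A.sort (· ≤ ·)).getD i 0 < (A.sort (· ≤ ·)).getD j 0 := by
  have hlj : j < (A.sort (· ≤ ·)).length := by rwa [Finset.length_sort]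
  have hli : i < (A.sort (· ≤ ·)).length := lt_trans (by omega) hlj
  rw [List.getD_eq_getElem _ _ hli, List.getD_eq_getElem _ _ hlj]
  exact (List.sortedLT_iff_pairwise.1 A.sortedLT_sort).rel_get_of_lt (a := ⟨i, hli⟩) (b := ⟨j, hlj⟩) hij

/-- property P1 implies property Π1. Here `W` is a string of length `n` over
the finite alphabet `Σ = α`, `0 < k < n`, and `S ⊆ {0,…,n−k}` is closed under pattern
equality. If a string `U` over `Σ ∪ {#}` satisfies P1, then there exists an injective
function from the p-chains of `I_W` to the p-chains of `I_U` mapping every p-chain of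
`I_W` to an equivalent p-chain of `I_U`. -/
theorem stmt4 {α : Type*} [Fintype α] [DecidableEq α] (W : List α) (n k : ℕ)
    (hn : W.length = n) (hk0 : 0 < k) (hkn : k < n)
    (S : Finset ℕ) (hSrange : ∀ i ∈ S, i ≤ n - k)
    (hSclosed : ∀ i ∈ S, ∀ j, j ≤ n - k →
      (W.drop j).take k = (W.drop i).take k → j ∈ S)
    (U : List (Option α)) (hP1 : PropP1 W S k U) :
    PropPi1 W S k U := by
  classical
  set W' : List (Option α) := W.map some with hW'
  set FW : Finset ℕ := IUset W S k W' with hFW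
  set FU : Finset ℕ := IUset W S k U with hFUdef
  obtain ⟨hcard, hsub⟩ := hP1
  set LW : List ℕ := FW.sort (· ≤ ·) with hLW
  set LU : List ℕ := FU.sort (· ≤ ·) with hLU
  have hLWlen : LW.length = FW.card := Finset.length_sort _
  have hLUlen : LU.length = FU.card := Finset.length_sort _
  -- the forward and backward maps
  set g : ℕ → ℕ := fun x => LU.getD (LW.idxOf x) 0 with hg
  set g' : ℕ → ℕ := fun y => LW.getD (LU.idxOf y) 0 with hg'
  -- index facts
  have hidxW : ∀ x ∈ FW, LW.idxOf x < FW.card := by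
    intro x hx
    have : x ∈ LW := (Finset.mem_sort _).2 hx
    rw [← hLWlen]; exact List.idxOf_lt_length_iff.2 this
  have hidxU : ∀ y ∈ FU, LU.idxOf y < FU.card := by
    intro y hy
    have : y ∈ LU := (Finset.mem_sort _).2 hy
    rw [← hLUlen]; exact List.idxOf_lt_length_iff.2 this
  have hWget : ∀ x ∈ FW, LW.getD (LW.idxOf x) 0 = x := by
    intro x hx
    have h := hidxW x hx
    rw [List.getD_eq_getElem _ _ (by omega : LW.idxOf x < LW.length)]
    exact List.getElem_idxOf _
  have hUget : ∀ y ∈ FU, LU.getD (LU.idxOf y) 0 = y := by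
    intro y hy
    have h := hidxU y hy
    rw [List.getD_eq_getElem _ _ (by omega : LU.idxOf y < LU.length)]
    exact List.getElem_idxOf _
  have hgmem : ∀ x ∈ FW, g x ∈ FU := by
    intro x hx
    exact sort_getD_mem FU (by rw [← hcard]; exact hidxW x hx)
  have hg'mem : ∀ y ∈ FU, g' y ∈ FW := by
    intro y hy
    exact sort_getD_mem FW (by rw [hcard]; exact hidxU y hy)
  have hgg' : ∀ x ∈ FW, g' (g x) = x := by
    intro x hx
    have hi := hidxW x hx
    have hiU : LW.idxOf x < LU.length := by rw [hLUlen, ← hcard]; exact hi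
    have : g x = LU[LW.idxOf x] := List.getD_eq_getElem _ _ hiU
    have hnd : LU.Nodup := Finset.sort_nodup _ _
    have hidx : LU.idxOf (g x) = LW.idxOf x := by
      rw [this]; exact List.Nodup.idxOf_getElem hnd _ hiU
    show LW.getD (LU.idxOf (g x)) 0 = x
    rw [hidx]; exact hWget x hx
  have hg'g : ∀ y ∈ FU, g (g' y) = y := by
    intro y hy
    have hi := hidxU y hy
    have hiW : LU.idxOf y < LW.length := by rw [hLWlen, hcard]; exact hi
    have : g' y = LW[LU.idxOf y] := List.getD_eq_getElem _ _ hiW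
    have hnd : LW.Nodup := Finset.sort_nodup _ _
    have hidx : LW.idxOf (g' y) = LU.idxOf y := by
      rw [this]; exact List.Nodup.idxOf_getElem hnd _ hiW
    show LU.getD (LW.idxOf (g' y)) 0 = y
    rw [hidx]; exact hUget y hy
  -- strict monotonicity
  have hgmono : ∀ x ∈ FW, ∀ y ∈ FW, x < y → g x < g y := by
    intro x hx y hy hxy
    have hix := hidxW x hx
    have hiy := hidxW y hy
    have hidxlt : LW.idxOf x < LW.idxOf y := by
      by_contra h
      push_neg at h
      rcases lt_or_eq_of_le h with h | h
      · have := sort_getD_lt FW h hix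
        rw [hWget x hx, hWget y hy] at this; omega
      · have : x = y := by
          rw [← hWget x hx, ← hWget y hy, h]
        omega
    exact sort_getD_lt FU hidxlt (by rw [← hcard]; exact hiy)
  have hgmono' : ∀ x ∈ FW, ∀ y ∈ FW, x ≤ y → g x ≤ g y := by
    intro x hx y hy hxy
    rcases lt_or_eq_of_le hxy with h | h
    · exact le_of_lt (hgmono x hx y hy h)
    · rw [h]
  have hginj : ∀ x ∈ FW, ∀ y ∈ FW, g x = g y → x = y := by
    intro x hx y hy h
    rw [← hgg' x hx, ← hgg' y hy, h]
  -- substring preservation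
  have hgsub : ∀ x ∈ FW, (U.drop (g x)).take k = (W'.drop x).take k := by
    intro x hx
    have hi := hidxW x hx
    have := hsub (LW.idxOf x) hi
    rw [hWget x hx] at this
    exact this
  -- Now build the map on p-chains.
  refine ⟨fun J => ⟨J.1.image g, ?_⟩, ?_, ?_⟩
  · -- image is a p-chain of FU
    obtain ⟨J, hJsub, hJchain⟩ := J
    constructor
    · intro y hy
      obtain ⟨x, hxJ, rfl⟩ := Finset.mem_image.1 hy
      exact hgmem x (hJsub hxJ)
    · intro y hy
      obtain ⟨x, hxJ, rfl⟩ := Finset.mem_image.1 hy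
      rcases hJchain x hxJ with hmin | ⟨i, hiJ, hpp⟩
      · left
        intro y' hy'
        obtain ⟨x', hx'J, rfl⟩ := Finset.mem_image.1 hy'
        exact hgmono' x (hJsub hxJ) x' (hJsub hx'J) (hmin x' hx'J)
      · right
        refine ⟨g i, Finset.mem_image_of_mem g hiJ, ?_⟩
        obtain ⟨hiF, hxF, hix, hmax, hov⟩ := hpp
        refine ⟨hgmem i hiF, hgmem x hxF, hgmono i hiF x hxF hix, ?_, ?_⟩
        · intro m hm hmlt
          have hm' : g' m ∈ FW := hg'mem m hm
          have hgm : g (g' m) = m := hg'g m hm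
          have h1 : g' m < x := by
            by_contra h
            push_neg at h
            have := hgmono' x hxF (g' m) hm' h
            rw [hgm] at this; omega
          have := hmax (g' m) hm' h1
          have := hgmono' (g' m) hm' i hiF this
          rw [hgm] at this; exact this
        · -- overlap transfer
          have e1 : (U.drop (g i + 1)).take (k - 1)
              = ((U.drop (g i)).take k).drop 1 := by
            rw [List.drop_take, List.drop_drop]
          have e2 : (U.drop (g x)).take (k - 1)
              = ((U.drop (g x)).take k).take (k - 1) := by
            rw [List.take_take, min_eq_left (by omega)]
          have e3 : (W'.drop (i + 1)).take (k - 1)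
              = ((W'.drop i).take k).drop 1 := by
            rw [List.drop_take, List.drop_drop]
          have e4 : (W'.drop x).take (k - 1)
              = ((W'.drop x).take k).take (k - 1) := by
            rw [List.take_take, min_eq_left (by omega)]
          rw [e1, e2, hgsub i hiF, hgsub x hxF, ← e3, ← e4]
          exact hov
  · -- injectivity
    intro J1 J2 h
    have h' : J1.1.image g = J2.1.image g := congrArg Subtype.val h
    apply Subtype.ext
    have key : ∀ (J : Finset ℕ), J ⊆ FW → (J.image g).image g' = J := by
      intro J hJ
      rw [Finset.image_image]
      have : ∀ x ∈ J, (g' ∘ g) x = id x := fun x hx => hgg' x (hJ hx)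
      rw [Finset.image_congr this, Finset.image_id]
    calc J1.1 = (J1.1.image g).image g' := (key J1.1 J1.2.1).symm
      _ = (J2.1.image g).image g' := by rw [h']
      _ = J2.1 := key J2.1 J2.2.1
  · -- equivalence
    intro J
    obtain ⟨J, hJsub, hJchain⟩ := J
    have hJinj : Set.InjOn g ↑J := fun x hx y hy h =>
      hginj x (hJsub hx) y (hJsub hy) h
    have hcardJ : (J.image g).card = J.card := Finset.card_image_of_injOn hJinj
    -- the sorted list of the image is the map of the sorted list
    have hsorteq : (J.image g).sort (· ≤ ·) = (J.sort (· ≤ ·)).map g := by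
      refine (fun h1 h2 h3 => List.Perm.eq_of_pairwise' (r := (· ≤ ·)) h2 h3 h1) ?_ ?_ ?_
      · apply List.perm_of_nodup_nodup_toFinset_eq (Finset.sort_nodup _ _)
        · apply List.Nodup.map_on _ (Finset.sort_nodup _ _)
          intro x hx y hy h
          exact hginj x (hJsub ((Finset.mem_sort _).1 hx))
            y (hJsub ((Finset.mem_sort _).1 hy)) h
        · ext y
          simp only [List.mem_toFinset, Finset.mem_sort, List.mem_map,
            Finset.mem_image]
      · exact Finset.pairwise_sort _ _
      · show ((J.sort (· ≤ ·)).map g).Pairwise (· ≤ ·)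
        rw [List.pairwise_map]
        refine List.Pairwise.imp_of_mem ?_ (List.sortedLT_iff_pairwise.1 J.sortedLT_sort)
        intro a b ha hb hab
        exact hgmono' a (hJsub ((Finset.mem_sort _).1 ha))
          b (hJsub ((Finset.mem_sort _).1 hb)) (le_of_lt hab)
    constructor
    · simp only [hcardJ]
    · intro j hj
      have hjl : j < (J.sort (· ≤ ·)).length := by rwa [Finset.length_sort]
      have : ((J.image g).sort (· ≤ ·)).getD j 0 = g ((J.sort (· ≤ ·)).getD j 0) := by
        rw [hsorteq, List.getD_eq_getElem _ _ (by simpa using hjl),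
          List.getD_eq_getElem _ _ hjl, List.getElem_map]
      rw [this]
      have hx : (J.sort (· ≤ ·)).getD j 0 ∈ FW := hJsub (sort_getD_mem J hj)
      exact (hgsub _ hx).symm
end

section
/- There exists a string X over Σ∪{#} satisfying properties C1, P1 and P2 such that: (i) |X| ≤ ⌈(n−k+1)/2⌉·k + ⌊(n−k+1)/2⌋; (ii) the letter # occurs at most ⌊(n−k+1)/2⌋ times in X; (iii) every occurrence of # in X is followed by at least k letters, so in particular any two occurrences of # are at least k+1 positions apart and X does not end with #; and (iv) X does not begin with #. -/
open List

namespace Stmt5Aux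

variable {α : Type*} [DecidableEq α]

/-- The construction: given an increasing list of non-sensitive positions, build the
string, merging consecutive positions and separating runs by `none`. -/
def buildStr (W : List α) (k : ℕ) : List ℕ → List (Option α)
  | [] => []
  | [i] => ((W.drop i).take k).map some
  | i :: j :: t =>
    if j = i + 1 then ((W.drop i).take 1).map some ++ buildStr W k (j :: t)
    else ((W.drop i).take k).map some ++ (none :: buildStr W k (j :: t))

lemma reduceOption_map_some (Y : List α) : (Y.map some).reduceOption = Y := by
  induction Y with
  | nil => rfl
  | cons a t ih => simp [List.reduceOption_cons_of_some, ih]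

lemma sort_toFinset_eq (ps : List ℕ) (h : ps.Pairwise (· < ·)) :
    ps.toFinset.sort (· ≤ ·) = ps := by
  have hnd : ps.Nodup := h.nodup
  apply List.Perm.eq_of_pairwise' (r := (· ≤ ·)) (Finset.pairwise_sort _ _) (h.imp le_of_lt)
  calc ps.toFinset.sort (· ≤ ·) ~ ps.toFinset.toList := Finset.sort_perm_toList _ _
    _ ~ ps := by
        rw [← List.toFinset_eq hnd]
        exact Quotient.exact (Multiset.coe_toList (↑ps : Multiset ℕ))

lemma countP_congr_pointwise (u v : List ℕ) (p q : ℕ → Bool)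
    (hlen : u.length = v.length)
    (h : ∀ t, t < u.length → p (u.getD t 0) = q (v.getD t 0)) :
    u.countP p = v.countP q := by
  induction u generalizing v with
  | nil => cases v with
    | nil => simp
    | cons b v => simp at hlen
  | cons a u ih =>
    cases v with
    | nil => simp at hlen
    | cons b v =>
      simp only [List.countP_cons]
      have h0 := h 0 (by simp)
      simp only [List.getD_cons_zero] at h0
      rw [ih v (by simpa using hlen) (fun t ht => by
        have := h (t+1) (by simpa using Nat.succ_lt_succ ht)
        simpa using this), h0]

/-- Master structural lemma for `buildStr`. -/
lemma buildStr_spec (W : List α) (k : ℕ) (l : List ℕ)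
    (hc : l.Chain' (· < ·)) (hb : ∀ x ∈ l, x + (k+1) ≤ W.length) :
    ∃ ps : List ℕ, ps.Pairwise (· < ·) ∧ ps.length = l.length ∧
      (l ≠ [] → ps.getD 0 0 = 0) ∧
      (∀ t, t < l.length →
        ps.getD t 0 + (k+1) ≤ (buildStr W (k+1) l).length ∧
        ((buildStr W (k+1) l).drop (ps.getD t 0)).take (k+1)
          = ((W.drop (l.getD t 0)).take (k+1)).map some) ∧
      (∀ p, p + (k+1) ≤ (buildStr W (k+1) l).length →
        (∀ x ∈ ((buildStr W (k+1) l).drop p).take (k+1), x ≠ none) → p ∈ ps) := by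
  induction l with
  | nil =>
    refine ⟨[], by simp, by simp, by simp, by simp, ?_⟩
    intro p hp
    simp only [buildStr, List.length_nil] at hp
    omega
  | cons i rest ih =>
    cases rest with
    | nil =>
      -- singleton
      have hi : i + (k+1) ≤ W.length := hb i (by simp)
      have hlen : (((W.drop i).take (k+1)).map some).length = k + 1 := by
        simp; omega
      refine ⟨[0], by simp, by simp, by simp, ?_, ?_⟩
      · intro t ht
        simp only [List.length_singleton] at ht
        interval_cases t
        constructor
        · simp only [buildStr, List.getD_cons_zero, List.length_map, List.length_take,
            List.length_drop]
          omega
        · simp only [buildStr, List.getD_cons_zero, List.drop_zero]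
          rw [List.take_of_length_le (by rw [hlen])]
      · intro p hp _
        simp only [buildStr] at hp
        rw [hlen] at hp
        simp
        omega
    | cons j t =>
      have hij : i < j := (List.isChain_cons_cons.mp hc).1
      have hc' : (j :: t).Chain' (· < ·) := (List.isChain_cons_cons.mp hc).2
      have hb' : ∀ x ∈ j :: t, x + (k+1) ≤ W.length := fun x hx => hb x (by simp [hx])
      have hi : i + (k+1) ≤ W.length := hb i (by simp)
      have hiW : i < W.length := by omega
      obtain ⟨ps', hsort', hlen', hhead', hwin', hmem'⟩ := ih hc' hb'
      have hrne : (j :: t) ≠ [] := by simp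
      have hps'0 : ps'.getD 0 0 = 0 := hhead' hrne
      have hlp' : 0 < ps'.length := by rw [hlen']; simp
      set X' := buildStr W (k+1) (j :: t) with hX'
      have hX'len : k + 1 ≤ X'.length := by
        have := (hwin' 0 (by simp)).1
        rw [hps'0] at this; omega
      have hX'win0 : X'.take (k+1) = ((W.drop j).take (k+1)).map some := by
        have := (hwin' 0 (by simp)).2
        rw [hps'0] at this
        simpa using this
      by_cases hcons : j = i + 1
      · -- consecutive case
        have hXeq : buildStr W (k+1) (i :: j :: t)
            = ((W.drop i).take 1).map some ++ X' := by
          rw [hX']; simp only [buildStr]; rw [if_pos hcons]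
        have hA1 : ((W.drop i).take 1).map some = [some W[i]] := by
          have hd : W.drop i = W[i] :: W.drop (i+1) := List.drop_eq_getElem_cons hiW
          rw [hd]
          rfl
        set X := buildStr W (k+1) (i :: j :: t) with hX
        have hXc : X = some W[i] :: X' := by rw [hXeq, hA1]; simp
        have hXlen : X.length = X'.length + 1 := by rw [hXc]; simp
        refine ⟨0 :: ps'.map (· + 1), ?_, by simp [hlen'], by simp, ?_, ?_⟩
        · -- sorted
          rw [List.pairwise_cons]
          refine ⟨?_, ?_⟩
          · intro b hb2
            simp only [List.mem_map] at hb2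
            obtain ⟨a, _, rfl⟩ := hb2; omega
          · exact hsort'.map _ (fun a b h => by omega)
        · intro s hs
          cases s with
          | zero =>
            constructor
            · simp only [List.getD_cons_zero]; omega
            · simp only [List.getD_cons_zero, List.drop_zero, hXc]
              rw [List.take_succ_cons]
              have h1 : X'.take k = (((W.drop (i+1)).take (k+1)).map some).take k := by
                rw [← hcons, ← hX'win0, List.take_take]
                congr 1; omega
              rw [h1, ← List.map_take, List.take_take]
              have hmin : min k (k+1) = k := by omega
              rw [hmin]
              rw [List.drop_eq_getElem_cons hiW, List.take_succ_cons, List.map_cons]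
          | succ s =>
            simp only [List.length_cons] at hs
            have hs' : s < ps'.length := by rw [hlen']; simpa using hs
            have hgd : (0 :: ps'.map (· + 1)).getD (s+1) 0 = ps'.getD s 0 + 1 := by
              rw [List.getD_cons_succ, List.getD_eq_getElem _ _ (by simpa using hs'),
                List.getElem_map, ← List.getD_eq_getElem _ _ hs']
            have hIH := hwin' s (by rw [← hlen']; exact hs')
            constructor
            · rw [hgd, hXlen]; omega
            · rw [hgd, List.getD_cons_succ, hXc, List.drop_succ_cons]
              exact hIH.2
        · intro p hp hnn
          cases p with
          | zero => simp
          | succ q =>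
            have hq : q + (k+1) ≤ X'.length := by rw [hXlen] at hp; omega
            have hwq : ∀ x ∈ (X'.drop q).take (k+1), x ≠ none := by
              intro x hx
              apply hnn
              rw [hXc, List.drop_succ_cons]; exact hx
            have := hmem' q hq hwq
            simp only [List.mem_cons, List.mem_map]
            exact Or.inr ⟨q, this, rfl⟩
      · -- gap case
        have hXeq : buildStr W (k+1) (i :: j :: t)
            = ((W.drop i).take (k+1)).map some ++ (none :: X') := by
          rw [hX']; simp only [buildStr]; rw [if_neg hcons]
        set A := ((W.drop i).take (k+1)).map some with hA
        have hAlen : A.length = k + 1 := by rw [hA]; simp; omega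
        have hXassoc : buildStr W (k+1) (i :: j :: t) = (A ++ [none]) ++ X' := by
          rw [hXeq]; simp
        set X := buildStr W (k+1) (i :: j :: t) with hXdef
        have hXlen : X.length = X'.length + (k + 2) := by
          rw [hXassoc]; simp [hAlen]; omega
        have hdropX : X.drop (k+2) = X' := by
          rw [hXassoc]; exact List.drop_left' (by simp [hAlen])
        refine ⟨0 :: ps'.map (· + (k+2)), ?_, by simp [hlen'], by simp, ?_, ?_⟩
        · rw [List.pairwise_cons]
          refine ⟨?_, ?_⟩
          · intro b hb2
            simp only [List.mem_map] at hb2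
            obtain ⟨a, _, rfl⟩ := hb2; omega
          · exact hsort'.map _ (fun a b h => by omega)
        · intro s hs
          cases s with
          | zero =>
            constructor
            · simp only [List.getD_cons_zero]; omega
            · simp only [List.getD_cons_zero, List.drop_zero]
              rw [hXassoc, List.append_assoc, List.take_append,
                hAlen, List.take_of_length_le (le_of_eq hAlen)]
              simp only [Nat.sub_self, List.take_zero, List.append_nil, List.getD_cons_zero]
              exact hA
          | succ s =>
            simp only [List.length_cons] at hs
            have hs' : s < ps'.length := by rw [hlen']; simpa using hs
            have hgd : (0 :: ps'.map (· + (k+2))).getD (s+1) 0 = ps'.getD s 0 + (k+2) := by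
              rw [List.getD_cons_succ, List.getD_eq_getElem _ _ (by simpa using hs'),
                List.getElem_map, ← List.getD_eq_getElem _ _ hs']
            have hIH := hwin' s (by rw [← hlen']; exact hs')
            constructor
            · rw [hgd, hXlen]; omega
            · rw [hgd, List.getD_cons_succ]
              have : X.drop (ps'.getD s 0 + (k+2)) = X'.drop (ps'.getD s 0) := by
                rw [show ps'.getD s 0 + (k+2) = (k+2) + ps'.getD s 0 by omega,
                  ← List.drop_drop, hdropX]
              rw [this]
              exact hIH.2
        · intro p hp hnn
          rcases Nat.lt_or_ge p 1 with h1 | h1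
          · interval_cases p; simp
          rcases Nat.lt_or_ge p (k+2) with h2 | h2
          · -- impossible: window contains the `none` at position k+1
            exfalso
            have hXk1 : X[k+1]? = some none := by
              rw [hXassoc, List.getElem?_append_left (by simp [hAlen]),
                List.getElem?_append_right (by omega), hAlen]
              simp
            apply hnn none ?_ rfl
            have hidx : k + 1 - p < k + 1 := by omega
            have hq : ((X.drop p).take (k+1))[k+1-p]? = some none := by
              rw [List.getElem?_take, if_pos hidx, List.getElem?_drop,
                show p + (k + 1 - p) = k + 1 by omega,
                ]
              exact hXk1
            have h2 : k + 1 - p < ((X.drop p).take (k+1)).length := by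
              by_contra hcn
              rw [List.getElem?_eq_none (by omega)] at hq; simp at hq
            rw [List.getElem?_eq_getElem h2] at hq
            exact (Option.some_inj.mp hq) ▸ List.getElem_mem h2
          · have hq : (p - (k+2)) + (k+1) ≤ X'.length := by omega
            have hpe : p = (p - (k+2)) + (k+2) := by omega
            have hwq : ∀ x ∈ (X'.drop (p - (k+2))).take (k+1), x ≠ none := by
              intro x hx
              apply hnn
              have : X.drop p = X'.drop (p - (k+2)) := by
                conv_lhs => rw [show p = (k+2) + (p - (k+2)) by omega]
                rw [← List.drop_drop, hdropX]
              rw [this]; exact hx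
            have := hmem' _ hq hwq
            simp only [List.mem_cons, List.mem_map]
            exact Or.inr ⟨p - (k+2), this, by omega⟩

lemma map_some_getElem?_ne {α : Type*} (Y : List α) (p : ℕ) :
    (Y.map some)[p]? ≠ some none := by
  rw [List.getElem?_map]
  cases Y[p]? <;> simp

lemma buildStr_spacing (W : List α) (k : ℕ) (l : List ℕ)
    (hc : l.Chain' (· < ·)) (hb : ∀ x ∈ l, x + (k+1) ≤ W.length) :
    ∀ p, (buildStr W (k+1) l)[p]? = some none →
      p + (k+1) + 1 ≤ (buildStr W (k+1) l).length ∧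
      ∀ q, p < q → q ≤ p + (k+1) → (buildStr W (k+1) l)[q]? ≠ some none := by
  induction l with
  | nil => intro p hp; simp [buildStr] at hp
  | cons i rest ih =>
    cases rest with
    | nil =>
      intro p hp
      exact absurd hp (map_some_getElem?_ne _ _)
    | cons j t =>
      have hij : i < j := (List.isChain_cons_cons.mp hc).1
      have hc' : (j :: t).Chain' (· < ·) := (List.isChain_cons_cons.mp hc).2
      have hb' : ∀ x ∈ j :: t, x + (k+1) ≤ W.length := fun x hx => hb x (by simp [hx])
      have hi : i + (k+1) ≤ W.length := hb i (by simp)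
      have hiW : i < W.length := by omega
      obtain ⟨ps', hsort', hlen', hhead', hwin', hmem'⟩ := buildStr_spec W k (j :: t) hc' hb'
      have hps'0 : ps'.getD 0 0 = 0 := hhead' (by simp)
      set X' := buildStr W (k+1) (j :: t) with hX'
      have hX'len : k + 1 ≤ X'.length := by
        have := (hwin' 0 (by simp)).1
        rw [hps'0] at this; omega
      have hX'win0 : X'.take (k+1) = ((W.drop j).take (k+1)).map some := by
        have := (hwin' 0 (by simp)).2
        rw [hps'0] at this
        simpa using this
      have hX'head : ∀ r, r ≤ k → X'[r]? ≠ some none := by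
        intro r hr hcontra
        have h1 : X'[r]? = (X'.take (k+1))[r]? := by
          rw [List.getElem?_take, if_pos (by omega)]
        rw [h1, hX'win0] at hcontra
        exact map_some_getElem?_ne _ _ hcontra
      have ihs := ih hc' hb'
      by_cases hcons : j = i + 1
      · have hXeq : buildStr W (k+1) (i :: j :: t)
            = ((W.drop i).take 1).map some ++ X' := by
          rw [hX']; simp only [buildStr]; rw [if_pos hcons]
        have hA1 : ((W.drop i).take 1).map some = [some W[i]] := by
          have hd : W.drop i = W[i] :: W.drop (i+1) := List.drop_eq_getElem_cons hiW
          rw [hd]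
          rfl
        set X := buildStr W (k+1) (i :: j :: t) with hX
        have hXc : X = some W[i] :: X' := by rw [hXeq, hA1]; simp
        have hXlen : X.length = X'.length + 1 := by rw [hXc]; simp
        have hget : ∀ r, X[r+1]? = X'[r]? := by
          intro r; rw [hXc, List.getElem?_cons_succ]
        intro p hp
        cases p with
        | zero => rw [hXc, List.getElem?_cons_zero] at hp; simp at hp
        | succ q =>
          rw [hget] at hp
          obtain ⟨hq1, hq2⟩ := ihs q hp
          constructor
          · omega
          · intro r hr1 hr2
            cases r with
            | zero => omega
            | succ r' =>
              rw [hget]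
              exact hq2 r' (by omega) (by omega)
      · have hXeq : buildStr W (k+1) (i :: j :: t)
            = ((W.drop i).take (k+1)).map some ++ (none :: X') := by
          rw [hX']; simp only [buildStr]; rw [if_neg hcons]
        set A := ((W.drop i).take (k+1)).map some with hA
        have hAlen : A.length = k + 1 := by rw [hA]; simp; omega
        have hXassoc : buildStr W (k+1) (i :: j :: t) = (A ++ [none]) ++ X' := by
          rw [hXeq]; simp
        set X := buildStr W (k+1) (i :: j :: t) with hXdef
        have hXlen : X.length = X'.length + (k + 2) := by
          rw [hXassoc]; simp [hAlen]; omega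
        have hgetlow : ∀ r, r ≤ k → X[r]? ≠ some none := by
          intro r hr hcontra
          rw [hXassoc, List.getElem?_append_left (by simp [hAlen]; omega),
            List.getElem?_append_left (by omega)] at hcontra
          exact map_some_getElem?_ne _ _ (hA ▸ hcontra)
        have hgetk1 : X[k+1]? = some none := by
          rw [hXassoc, List.getElem?_append_left (by simp [hAlen]),
            List.getElem?_append_right (by omega), hAlen]
          simp
        have hgethigh : ∀ r, X[r + (k+2)]? = X'[r]? := by
          intro r
          rw [hXassoc, List.getElem?_append_right (by simp [hAlen])]
          congr 1
          simp [hAlen]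
        intro p hp
        rcases Nat.lt_or_ge p (k+1) with h1 | h1
        · exact absurd hp (hgetlow p (by omega))
        rcases Nat.lt_or_ge p (k+2) with h2 | h2
        · -- p = k+1
          have hpe : p = k + 1 := by omega
          subst hpe
          constructor
          · omega
          · intro q hq1 hq2
            have hq3 : q - (k+2) ≤ k := by omega
            rw [show q = (q - (k+2)) + (k+2) by omega, hgethigh]
            exact hX'head _ hq3
        · have hpe : p = (p - (k+2)) + (k+2) := by omega
          rw [hpe, hgethigh] at hp
          obtain ⟨hq1, hq2⟩ := ihs _ hp
          constructor
          · omega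
          · intro q hq1' hq2'
            rw [show q = (q - (k+2)) + (k+2) by omega, hgethigh]
            exact hq2 (q - (k+2)) (by omega) (by omega)

lemma buildStr_length_le (W : List α) (k M : ℕ) :
    ∀ (l : List ℕ) (a : ℕ), l.Chain' (· < ·) → (∀ x ∈ l, x < M) → (∀ x ∈ l, a ≤ x) →
      (buildStr W (k+1) l).length ≤ ((M - a + 1)/2) * (k+1) + (M - a)/2 := by
  intro l
  induction l with
  | nil => intro a _ _ _; simp [buildStr]
  | cons i rest ih =>
    intro a hc hM ha
    have hiM : i < M := hM i (by simp)
    have hai : a ≤ i := ha i (by simp)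
    cases rest with
    | nil =>
      have hlen : (buildStr W (k+1) [i]).length ≤ k + 1 := by
        simp [buildStr]
      have h2 : 1 ≤ (M - a + 1)/2 := by omega
      calc (buildStr W (k+1) [i]).length ≤ 1 * (k+1) := by rw [one_mul]; exact hlen
        _ ≤ ((M - a + 1)/2) * (k+1) := Nat.mul_le_mul_right _ h2
        _ ≤ _ := Nat.le_add_right _ _
    | cons j t =>
      have hij : i < j := (List.isChain_cons_cons.mp hc).1
      have hc' : (j :: t).Chain' (· < ·) := (List.isChain_cons_cons.mp hc).2
      have hM' : ∀ x ∈ j :: t, x < M := fun x hx => hM x (by simp [hx])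
      have hjlow : ∀ x ∈ j :: t, j ≤ x := by
        intro x hx
        rcases List.mem_cons.mp hx with rfl | hx'
        · exact le_refl _
        · exact le_of_lt (List.rel_of_pairwise_cons (List.isChain_iff_pairwise.mp hc') hx')
      set m := M - a with hm
      by_cases hcons : j = i + 1
      · have hXeq : buildStr W (k+1) (i :: j :: t)
            = ((W.drop i).take 1).map some ++ buildStr W (k+1) (j :: t) := by
          simp only [buildStr]; rw [if_pos hcons]
        have hIH := ih (a+1) hc' hM' (fun x hx => by
          have := hjlow x hx; omega)
        have hlen : (buildStr W (k+1) (i :: j :: t)).length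
            ≤ 1 + (buildStr W (k+1) (j :: t)).length := by
          rw [hXeq, List.length_append]
          have : (((W.drop i).take 1).map some).length ≤ 1 := by simp
          omega
        have hm1 : M - (a+1) = m - 1 := by omega
        rw [hm1] at hIH
        have hm2 : 1 ≤ m := by omega
        rcases Nat.even_or_odd m with ⟨c, hc2⟩ | ⟨c, hc2⟩
        · have e1 : (m - 1 + 1)/2 = c := by omega
          have e2 : (m - 1)/2 = c - 1 := by omega
          have e3 : (m + 1)/2 = c := by omega
          have e4 : m/2 = c := by omega
          rw [e1, e2] at hIH
          rw [e3, e4]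
          have hc1 : 1 ≤ c := by omega
          have e5 : c - 1 + 1 = c := by omega
          linarith
        · have e1 : (m - 1 + 1)/2 = c := by omega
          have e2 : (m - 1)/2 = c := by omega
          have e3 : (m + 1)/2 = c + 1 := by omega
          have e4 : m/2 = c := by omega
          rw [e1, e2] at hIH
          rw [e3, e4, add_mul, one_mul]
          linarith
      · have hXeq : buildStr W (k+1) (i :: j :: t)
            = ((W.drop i).take (k+1)).map some ++ (none :: buildStr W (k+1) (j :: t)) := by
          simp only [buildStr]; rw [if_neg hcons]
        have hj2 : i + 2 ≤ j := by omega
        have hIH := ih (a+2) hc' hM' (fun x hx => by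
          have := hjlow x hx; omega)
        have hlen : (buildStr W (k+1) (i :: j :: t)).length
            ≤ (k+2) + (buildStr W (k+1) (j :: t)).length := by
          rw [hXeq, List.length_append]
          have : (((W.drop i).take (k+1)).map some).length ≤ k+1 := by simp
          simp only [List.length_cons]
          omega
        have hjM : j < M := hM' j (by simp)
        have hm3 : 3 ≤ m := by omega
        have hm1 : M - (a+2) = m - 2 := by omega
        rw [hm1] at hIH
        have e1 : (m + 1)/2 = (m - 2 + 1)/2 + 1 := by omega
        have e2 : m/2 = (m - 2)/2 + 1 := by omega
        rw [e1, e2, add_mul, one_mul]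
        linarith

lemma buildStr_count_le (W : List α) (k M : ℕ) :
    ∀ (l : List ℕ) (a : ℕ), l.Chain' (· < ·) → (∀ x ∈ l, x < M) → (∀ x ∈ l, a ≤ x) →
      (buildStr W (k+1) l).count none ≤ (M - a)/2 := by
  intro l
  induction l with
  | nil => intro a _ _ _; simp [buildStr]
  | cons i rest ih =>
    intro a hc hM ha
    have hiM : i < M := hM i (by simp)
    have hai : a ≤ i := ha i (by simp)
    cases rest with
    | nil =>
      have : (buildStr W (k+1) [i]).count none = 0 := by
        apply List.count_eq_zero.mpr
        simp only [buildStr]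
        intro hmem
        rcases List.mem_map.mp hmem with ⟨y, _, hy⟩
        exact Option.some_ne_none _ hy
      omega
    | cons j t =>
      have hij : i < j := (List.isChain_cons_cons.mp hc).1
      have hc' : (j :: t).Chain' (· < ·) := (List.isChain_cons_cons.mp hc).2
      have hM' : ∀ x ∈ j :: t, x < M := fun x hx => hM x (by simp [hx])
      have hjlow : ∀ x ∈ j :: t, j ≤ x := by
        intro x hx
        rcases List.mem_cons.mp hx with rfl | hx'
        · exact le_refl _
        · exact le_of_lt (List.rel_of_pairwise_cons (List.isChain_iff_pairwise.mp hc') hx')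
      by_cases hcons : j = i + 1
      · have hXeq : buildStr W (k+1) (i :: j :: t)
            = ((W.drop i).take 1).map some ++ buildStr W (k+1) (j :: t) := by
          simp only [buildStr]; rw [if_pos hcons]
        have hIH := ih (a+1) hc' hM' (fun x hx => by have := hjlow x hx; omega)
        rw [hXeq, List.count_append]
        have h0 : (((W.drop i).take 1).map some).count none = 0 := by
          apply List.count_eq_zero.mpr
          intro hmem
          rcases List.mem_map.mp hmem with ⟨y, _, hy⟩
          exact Option.some_ne_none _ hy
        omega
      · have hXeq : buildStr W (k+1) (i :: j :: t)
            = ((W.drop i).take (k+1)).map some ++ (none :: buildStr W (k+1) (j :: t)) := by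
          simp only [buildStr]; rw [if_neg hcons]
        have hjM : j < M := hM' j (by simp)
        have hIH := ih (a+2) hc' hM' (fun x hx => by have := hjlow x hx; omega)
        have h0 : (((W.drop i).take (k+1)).map some).count none = 0 := by
          apply List.count_eq_zero.mpr
          intro hmem
          rcases List.mem_map.mp hmem with ⟨y, _, hy⟩
          exact Option.some_ne_none _ hy
        rw [hXeq, List.count_append, List.count_cons_self, h0]
        omega

end Stmt5Aux

/-- there exists a string `X` over `Σ ∪ {#}` satisfying C1, P1 and P2 with
(i) `|X| ≤ ⌈(n−k+1)/2⌉·k + ⌊(n−k+1)/2⌋`;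
(ii) `#` occurs at most `⌊(n−k+1)/2⌋` times in `X`;
(iii) every occurrence of `#` is followed by at least `k` letters (of `Σ`), so in
particular any two occurrences of `#` are at least `k+1` positions apart and `X` does not
end with `#`; and
(iv) `X` does not begin with `#`. -/
theorem stmt5 {α : Type*} [Fintype α] [DecidableEq α] (W : List α) (n k : ℕ)
    (hn : W.length = n) (hk0 : 0 < k) (hkn : k < n)
    (S : Finset ℕ) (hSrange : ∀ i ∈ S, i ≤ n - k)
    (hSclosed : ∀ i ∈ S, ∀ j, j ≤ n - k →
      (W.drop j).take k = (W.drop i).take k → j ∈ S) :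
    ∃ X : List (Option α),
      PropC1 W S k X ∧ PropP1 W S k X ∧ PropP2 W S k X ∧
      -- (i)  ⌈(n−k+1)/2⌉ = (n−k+2)/2 and ⌊(n−k+1)/2⌋ = (n−k+1)/2 in ℕ-division
      X.length ≤ ((n - k + 2) / 2) * k + (n - k + 1) / 2 ∧
      -- (ii)
      X.count none ≤ (n - k + 1) / 2 ∧
      -- (iii)
      (∀ i, X[i]? = some none →
        i + k + 1 ≤ X.length ∧ ∀ j, i < j → j ≤ i + k → X[j]? ≠ some none) ∧
      (∀ i j, X[i]? = some none → X[j]? = some none → i < j → i + k + 1 ≤ j) ∧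
      X.getLast? ≠ some none ∧
      -- (iv)
      X.head? ≠ some none := by
  obtain ⟨k', rfl⟩ : ∃ k', k = k' + 1 := ⟨k - 1, by omega⟩
  set M := n - k' with hM
  have hkn' : k' + 1 < n := hkn
  have hWlen : W.length = n := hn
  set Iset : Finset ℕ := (Finset.range M).filter (fun i => i ∉ S) with hIset
  set l : List ℕ := Iset.sort (· ≤ ·) with hldef
  have hsortl : l.Pairwise (· < ·) := (Finset.sortedLT_sort _).pairwise
  have hc : l.Chain' (· < ·) := List.isChain_iff_pairwise.mpr hsortl
  have hmeml : ∀ x, x ∈ l ↔ (x < M ∧ x ∉ S) := by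
    intro x
    rw [hldef, Finset.mem_sort, hIset, Finset.mem_filter, Finset.mem_range]
  have hb : ∀ x ∈ l, x + (k'+1) ≤ W.length := by
    intro x hx
    have := (hmeml x).mp hx
    omega
  obtain ⟨ps, hpsort, hpslen, hpshead, hwin, hmem⟩ := Stmt5Aux.buildStr_spec W k' l hc hb
  set X := Stmt5Aux.buildStr W (k'+1) l with hXdef
  have hpsnodup : ps.Nodup := hpsort.nodup
  have hlnodup : l.Nodup := hsortl.nodup
  -- membership in ps via index
  have hps_window : ∀ p ∈ ps, ∃ q ∈ l, p + (k'+1) ≤ X.length ∧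
      (X.drop p).take (k'+1) = ((W.drop q).take (k'+1)).map some := by
    intro p hp
    obtain ⟨t0, ht0, hpt0⟩ := List.mem_iff_getElem.mp hp
    have ht0' : t0 < l.length := by omega
    have hgd : ps.getD t0 0 = p := by rw [List.getD_eq_getElem _ _ ht0, hpt0]
    obtain ⟨h1, h2⟩ := hwin t0 ht0'
    rw [hgd] at h1 h2
    refine ⟨l.getD t0 0, ?_, h1, h2⟩
    rw [List.getD_eq_getElem _ _ ht0']
    exact List.getElem_mem _
  -- the two IUsets
  have hIWm : IUset W S (k'+1) (W.map some) = Iset := by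
    ext i
    simp only [IUset, Finset.mem_filter, Finset.mem_range, List.length_map, hIset]
    rw [← List.map_drop, ← List.map_take, hWlen]
    constructor
    · rintro ⟨hr, _, h2⟩
      refine ⟨by omega, fun hiS => h2 ⟨i, hiS, by rw [Stmt5Aux.reduceOption_map_some]⟩⟩
    · rintro ⟨hr, hiS⟩
      refine ⟨by omega, ?_, ?_⟩
      · intro x hx
        rcases List.mem_map.mp hx with ⟨y, _, rfl⟩
        simp
      · rintro ⟨j, hjS, heq⟩
        rw [Stmt5Aux.reduceOption_map_some] at heq
        exact hiS (hSclosed j hjS i (by omega) heq)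
  have hIX : IUset W S (k'+1) X = ps.toFinset := by
    ext p
    simp only [IUset, Finset.mem_filter, Finset.mem_range, List.mem_toFinset]
    constructor
    · rintro ⟨hr, h1, _⟩
      exact hmem p (by omega) h1
    · intro hp
      obtain ⟨q, hq, h1, h2⟩ := hps_window p hp
      have hqM : q < M ∧ q ∉ S := (hmeml q).mp hq
      refine ⟨by omega, ?_, ?_⟩
      · rw [h2]
        intro x hx
        rcases List.mem_map.mp hx with ⟨y, _, rfl⟩
        simp
      · rintro ⟨j, hjS, heq⟩
        rw [h2, Stmt5Aux.reduceOption_map_some] at heq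
        exact hqM.2 (hSclosed j hjS q (by omega) heq)
  have hsortps : ps.toFinset.sort (· ≤ ·) = ps := Stmt5Aux.sort_toFinset_eq ps hpsort
  have hcardI : Iset.card = l.length := (Finset.length_sort _).symm
  have hcardps : ps.toFinset.card = ps.length := List.toFinset_card_of_nodup hpsnodup
  refine ⟨X, ?_, ?_, ?_, ?_, ?_, ?_, ?_, ?_, ?_⟩
  · -- PropC1
    intro j hjS hinf
    obtain ⟨s, t', hst⟩ := hinf
    have hjn : j ≤ n - (k'+1) := hSrange j hjS
    have hmlen : (((W.drop j).take (k'+1)).map some).length = k'+1 := by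
      rw [List.length_map, List.length_take, List.length_drop, hWlen]
      omega
    have hXlen' : X.length = s.length + ((k'+1) + t'.length) := by
      rw [← hst]
      simp only [List.length_append, List.length_map, List.length_take, List.length_drop]
      omega
    have hdrop : X.drop s.length = (((W.drop j).take (k'+1)).map some) ++ t' := by
      rw [← hst, List.append_assoc, List.drop_left]
    have hwinp : (X.drop s.length).take (k'+1) = ((W.drop j).take (k'+1)).map some := by
      rw [hdrop, List.take_left' hmlen]
    have hp := hmem s.length (by omega) (by
      rw [hwinp]
      intro x hx
      rcases List.mem_map.mp hx with ⟨y, _, rfl⟩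
      simp)
    obtain ⟨q, hq, _, h2⟩ := hps_window _ hp
    rw [hwinp] at h2
    have heq : (W.drop j).take (k'+1) = (W.drop q).take (k'+1) :=
      List.map_injective_iff.mpr (Option.some_injective _) h2
    have hqM : q < M ∧ q ∉ S := (hmeml q).mp hq
    exact hqM.2 (hSclosed j hjS q (by omega) heq.symm)
  · -- PropP1
    constructor
    · rw [hIWm, hIX, hcardI, hcardps, hpslen]
    · intro j hj
      rw [hIWm] at hj
      rw [hIWm, hIX, hsortps, ← hldef]
      rw [hcardI] at hj
      obtain ⟨h1, h2⟩ := hwin j hj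
      rw [h2, ← List.map_drop, ← List.map_take]
  · -- PropP2
    intro P hPlen hPns
    unfold strFreq
    have hPlm : (P.map some).length = k' + 1 := by rw [List.length_map, hPlen]
    simp only [hPlm, hPlen, hWlen]
    apply Finset.card_bij' (i := fun p _ => l.getD (ps.idxOf p) 0)
      (j := fun q _ => ps.getD (l.idxOf q) 0)
    · -- maps into
      intro p hp
      rw [Finset.mem_filter, Finset.mem_range] at hp
      obtain ⟨hr, hw⟩ := hp
      have hpps : p ∈ ps := hmem p (by omega) (by
        rw [hw]
        intro x hx
        rcases List.mem_map.mp hx with ⟨y, _, rfl⟩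
        simp)
      have hidx : ps.idxOf p < ps.length := List.idxOf_lt_length_iff.mpr hpps
      have hidx' : ps.idxOf p < l.length := by omega
      obtain ⟨h1, h2⟩ := hwin (ps.idxOf p) hidx'
      rw [List.getD_eq_getElem _ _ hidx, List.getElem_idxOf hidx] at h1 h2
      rw [hw] at h2
      have heq : P = (W.drop (l.getD (ps.idxOf p) 0)).take (k'+1) :=
        List.map_injective_iff.mpr (Option.some_injective _) h2
      have hql : l.getD (ps.idxOf p) 0 ∈ l := by
        rw [List.getD_eq_getElem _ _ hidx']
        exact List.getElem_mem _
      have hqM := (hmeml _).mp hql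
      rw [Finset.mem_filter, Finset.mem_range]
      exact ⟨by omega, heq.symm⟩
    · -- reverse map into
      intro q hq
      rw [Finset.mem_filter, Finset.mem_range] at hq
      obtain ⟨hr, hw⟩ := hq
      have hqS : q ∉ S := fun hqS => hPns q hqS (hw.symm)
      have hql : q ∈ l := (hmeml q).mpr ⟨by omega, hqS⟩
      have hidx : l.idxOf q < l.length := List.idxOf_lt_length_iff.mpr hql
      obtain ⟨h1, h2⟩ := hwin (l.idxOf q) hidx
      rw [List.getD_eq_getElem _ _ hidx, List.getElem_idxOf hidx, hw] at h2
      rw [Finset.mem_filter, Finset.mem_range]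
      exact ⟨by omega, h2⟩
    · -- left inverse
      intro p hp
      rw [Finset.mem_filter, Finset.mem_range] at hp
      obtain ⟨hr, hw⟩ := hp
      have hpps : p ∈ ps := hmem p (by omega) (by
        rw [hw]
        intro x hx
        rcases List.mem_map.mp hx with ⟨y, _, rfl⟩
        simp)
      have hidx : ps.idxOf p < ps.length := List.idxOf_lt_length_iff.mpr hpps
      have hidx' : ps.idxOf p < l.length := by omega
      rw [List.getD_eq_getElem _ _ hidx', List.Nodup.idxOf_getElem hlnodup _ hidx',
        List.getD_eq_getElem _ _ hidx, List.getElem_idxOf hidx]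
    · -- right inverse
      intro q hq
      rw [Finset.mem_filter, Finset.mem_range] at hq
      obtain ⟨hr, hw⟩ := hq
      have hqS : q ∉ S := fun hqS => hPns q hqS (hw.symm)
      have hql : q ∈ l := (hmeml q).mpr ⟨by omega, hqS⟩
      have hidx : l.idxOf q < l.length := List.idxOf_lt_length_iff.mpr hql
      have hidx'' : l.idxOf q < ps.length := by omega
      rw [List.getD_eq_getElem _ _ hidx'', List.Nodup.idxOf_getElem hpsnodup _ hidx'',
        List.getD_eq_getElem _ _ hidx, List.getElem_idxOf hidx]
  · -- length bound
    have hbound := Stmt5Aux.buildStr_length_le W k' M l 0 hc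
      (fun x hx => ((hmeml x).mp hx).1) (fun x _ => Nat.zero_le x)
    have e1 : M - 0 + 1 = n - (k'+1) + 2 := by omega
    have e2 : M - 0 = n - (k'+1) + 1 := by omega
    rw [e1, e2] at hbound
    exact hbound
  · -- count bound
    have hbound := Stmt5Aux.buildStr_count_le W k' M l 0 hc
      (fun x hx => ((hmeml x).mp hx).1) (fun x _ => Nat.zero_le x)
    have e2 : M - 0 = n - (k'+1) + 1 := by omega
    rw [e2] at hbound
    exact hbound
  · -- spacing 1
    intro i hi
    have := Stmt5Aux.buildStr_spacing W k' l hc hb i hi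
    rw [← hXdef] at this
    exact ⟨by omega, fun j hj1 hj2 => this.2 j hj1 (by omega)⟩
  · -- spacing 2
    intro i j hi hj hij
    have := Stmt5Aux.buildStr_spacing W k' l hc hb i hi
    rw [← hXdef] at this
    by_contra hcon
    exact this.2 j hij (by omega) hj
  · -- getLast
    intro h
    rw [List.getLast?_eq_getElem?] at h
    obtain ⟨hlt, _⟩ := List.getElem?_eq_some_iff.mp h
    have := (Stmt5Aux.buildStr_spacing W k' l hc hb _ h).1
    rw [← hXdef] at this
    omega
  · -- head
    intro h
    rw [List.head?_eq_getElem?] at h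
    obtain ⟨hlt, _⟩ := List.getElem?_eq_some_iff.mp h
    have hlne : l ≠ [] := by
      intro hleq
      rw [hXdef, hleq] at hlt
      simp [Stmt5Aux.buildStr] at hlt
    have hps0 : ps.getD 0 0 = 0 := hpshead hlne
    have hl0 : 0 < l.length := List.length_pos_iff.mpr hlne
    obtain ⟨h1, h2⟩ := hwin 0 hl0
    rw [hps0] at h1 h2
    rw [List.drop_zero] at h2
    have : X[0]? = ((X.take (k'+1)))[0]? := by
      rw [List.getElem?_take, if_pos (by omega)]
    rw [this, h2] at h
    exact Stmt5Aux.map_some_getElem?_ne _ _ h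
end

section
/- Tightness of the length upper bound for PFS: suppose k ≥ 2, every length-(k−1) string over Σ occurs exactly once as a substring of W (W is an order-(k−1) de Bruijn sequence over Σ), n−k is even, and S = {1,3,5,…,n−k−1}. Then every string Y over Σ∪{#} satisfying properties C1, Π1 and P2 has length |Y| ≥ ⌈(n−k+1)/2⌉·k + ⌊(n−k+1)/2⌋. -/
section Stmt8AuxA

lemma map_some_reduceOption {β : Type*} {l : List (Option β)} (h : ∀ x ∈ l, x ≠ none) :
    l.reduceOption.map some = l := by
  induction l with
  | nil => simp
  | cons a t ih =>
    cases a with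
    | none => exact absurd rfl (h none List.mem_cons_self)
    | some b =>
      simp only [List.reduceOption_cons_of_some, List.map_cons]
      rw [ih (fun x hx => h x (List.mem_cons_of_mem _ hx))]

lemma reduceOption_map_some_eq {β : Type*} (l : List β) : (l.map some).reduceOption = l := by
  induction l with
  | nil => rfl
  | cons a t ih => simp [List.reduceOption_cons_of_some, ih]

lemma forall_mem_take_drop {β : Type*} {Y : List β} {i c : ℕ} {Q : β → Prop} :
    (∀ x ∈ (Y.drop i).take c, Q x) ↔ ∀ t, i ≤ t → t < i + c → ∀ h : t < Y.length, Q (Y[t]'h) := by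
  constructor
  · intro H t hit hitc ht
    have hmem : Y[t]'ht ∈ (Y.drop i).take c := by
      rw [List.mem_iff_getElem]
      refine ⟨t - i, by simp [List.length_take, List.length_drop]; omega, ?_⟩
      rw [List.getElem_take, List.getElem_drop]
      congr 1
      omega
    exact H _ hmem
  · intro H x hx
    rw [List.mem_iff_getElem] at hx
    obtain ⟨s, hs, rfl⟩ := hx
    have hs' : s < c ∧ i + s < Y.length := by
      simp only [List.length_take, List.length_drop, lt_min_iff] at hs
      omega
    rw [List.getElem_take, List.getElem_drop]
    exact H (i+s) (by omega) (by omega) (by omega)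

lemma gap_max {F : Finset ℕ} {d r : ℕ} (hd : 0 < d) (hcard : r + 1 ≤ F.card)
    (hgap : ∀ p ∈ F, ∀ q ∈ F, p < q → p + d ≤ q) : ∃ e ∈ F, r * d ≤ e := by
  have hne : F.Nonempty := Finset.card_pos.mp (by omega)
  refine ⟨F.max' hne, F.max'_mem hne, ?_⟩
  have hmono : ∀ p ∈ F, ∀ q ∈ F, p < q → p / d < q / d := by
    intro p hp q hq hpq
    have h := hgap p hp q hq hpq
    calc p / d < p / d + 1 := Nat.lt_succ_self _
      _ = (p + d) / d := (Nat.add_div_right p hd).symm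
      _ ≤ q / d := Nat.div_le_div_right h
  have hinj : Set.InjOn (· / d) F := by
    intro p hp q hq h
    by_contra hne2
    rcases Nat.lt_or_ge p q with h1 | h1
    · exact absurd h (Nat.ne_of_lt (hmono p hp q hq h1))
    · exact absurd h.symm (Nat.ne_of_lt (hmono q hq p hp (by omega)))
  have hsub : ∀ p ∈ F, p / d ∈ Finset.range (F.max' hne / d + 1) := by
    intro p hp
    rw [Finset.mem_range]
    have := Nat.div_le_div_right (c := d) (F.le_max' p hp)
    omega
  have hle := Finset.card_le_card_of_injOn (· / d) hsub hinj
  rw [Finset.card_range] at hle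
  have h2 : r ≤ F.max' hne / d := by omega
  exact (Nat.le_div_iff_mul_le hd).mp h2

end Stmt8AuxA



section Stmt8AuxB

lemma strFreq_pos' {γ : Type*} [DecidableEq γ] {T P : List γ} {i : ℕ}
    (hi : i + P.length ≤ T.length) (h : (T.drop i).take P.length = P) : 0 < strFreq T P :=
  Finset.card_pos.mpr ⟨i, Finset.mem_filter.mpr ⟨Finset.mem_range.mpr (by omega), h⟩⟩

lemma exists_occ' {γ : Type*} [DecidableEq γ] {T P : List γ} (h : 0 < strFreq T P) :
    ∃ i, i + P.length ≤ T.length ∧ (T.drop i).take P.length = P := by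
  obtain ⟨i, hi⟩ := Finset.card_pos.mp h
  rw [Finset.mem_filter, Finset.mem_range] at hi
  exact ⟨i, by omega, hi.2⟩

lemma occ_unique' {γ : Type*} [DecidableEq γ] {T P : List γ} (h : strFreq T P = 1) {i j : ℕ}
    (hi : i + P.length ≤ T.length) (hj : j + P.length ≤ T.length)
    (h1 : (T.drop i).take P.length = P) (h2 : (T.drop j).take P.length = P) : i = j := by
  have hcle := Finset.card_le_one.mp (le_of_eq h)
  exact hcle i (Finset.mem_filter.mpr ⟨Finset.mem_range.mpr (by omega), h1⟩)
    j (Finset.mem_filter.mpr ⟨Finset.mem_range.mpr (by omega), h2⟩)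

end Stmt8AuxB

/-- tightness of the PFS length upper bound: if `k ≥ 2`, every
length-`(k−1)` string over `Σ` occurs exactly once as a substring of `W` (an
order-`(k−1)` de Bruijn sequence), `n − k` is even, and `S = {1,3,5,…,n−k−1}`, then
every string `Y` over `Σ ∪ {#}` satisfying C1, Π1 and P2 has
`|Y| ≥ ⌈(n−k+1)/2⌉·k + ⌊(n−k+1)/2⌋`. -/
theorem stmt8 {α : Type*} [Fintype α] [DecidableEq α] (W : List α) (n k : ℕ)
    (hn : W.length = n) (hk : 2 ≤ k) (hkn : k < n)
    (hdeBruijn : ∀ P : List α, P.length = k - 1 → strFreq W P = 1)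
    (heven : Even (n - k))
    (S : Finset ℕ) (hS : S = (Finset.range (n - k)).filter (fun i => i % 2 = 1)) :
    ∀ Y : List (Option α), PropC1 W S k Y → PropPi1 W S k Y → PropP2 W S k Y →
      ((n - k + 2) / 2) * k + (n - k + 1) / 2 ≤ Y.length := by
  intro Y hC1 hPi1 hP2
  obtain ⟨t, ht⟩ := heven
  have hnW : W.length = n := hn
  -- length of substrings of W
  have hlen_sub : ∀ i c : ℕ, i + c ≤ n → ((W.drop i).take c).length = c := by
    intro i c h
    simp only [List.length_take, List.length_drop, hnW]
    omega
  -- uniqueness of (k-1)-substrings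
  have uniq_km1 : ∀ p q : ℕ, p + (k-1) ≤ n → q + (k-1) ≤ n →
      (W.drop p).take (k-1) = (W.drop q).take (k-1) → p = q := by
    intro p q hp hq hpq
    have hPlen : ((W.drop p).take (k-1)).length = k - 1 := hlen_sub p (k-1) hp
    have h1 := hdeBruijn ((W.drop p).take (k-1)) hPlen
    refine occ_unique' h1 (i := p) (j := q) ?_ ?_ ?_ ?_
    · rw [hPlen, hnW]; omega
    · rw [hPlen, hnW]; omega
    · rw [hPlen]
    · rw [hPlen]; exact hpq.symm
  -- uniqueness of k-substrings
  have uniq_k : ∀ p q : ℕ, p + k ≤ n → q + k ≤ n →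
      (W.drop p).take k = (W.drop q).take k → p = q := by
    intro p q hp hq h
    refine uniq_km1 p q (by omega) (by omega) ?_
    have h2 : ((W.drop p).take k).take (k-1) = ((W.drop q).take k).take (k-1) := by rw [h]
    rwa [List.take_take, List.take_take, min_eq_left (by omega)] at h2
  -- membership in S
  have hSmem : ∀ j : ℕ, j ∈ S ↔ j < n - k ∧ j % 2 = 1 := by
    intro j
    subst hS
    simp [Finset.mem_filter, Finset.mem_range]
  -- even positions are in I_W
  have hWmem : ∀ i : ℕ, i ≤ n - k → i % 2 = 0 → i ∈ IUset W S k (W.map some) := by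
    intro i hi hpar
    simp only [IUset, Finset.mem_filter, Finset.mem_range]
    refine ⟨by simp [hnW]; omega, ?_, ?_⟩
    · intro x hx
      rw [← List.map_drop, ← List.map_take] at hx
      obtain ⟨a, _, rfl⟩ := List.mem_map.mp hx
      simp
    · rintro ⟨j, hjS, hj⟩
      rw [← List.map_drop, ← List.map_take, reduceOption_map_some_eq] at hj
      have hj2 := (hSmem j).mp hjS
      have := uniq_k i j (by omega) (by omega) hj
      omega
  obtain ⟨f, hfinj, hfequiv⟩ := hPi1
  -- for every even i ≤ n-k, an element of I_Y carrying the i-th pattern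
  have hgex : ∀ i : ℕ, ∃ p : ℕ, i ≤ n - k → i % 2 = 0 →
      p ∈ IUset W S k Y ∧ (Y.drop p).take k = ((W.map some).drop i).take k := by
    intro i
    by_cases hcase : i ≤ n - k ∧ i % 2 = 0
    · have hiW : i ∈ IUset W S k (W.map some) := hWmem i hcase.1 hcase.2
      have hch : IsPChain (W.map some) k (IUset W S k (W.map some)) {i} := by
        constructor
        · rwa [Finset.singleton_subset_iff]
        · intro x hx
          exact Or.inl (fun y hy => by
            rw [Finset.mem_singleton] at hx hy
            omega)
      have hce := hfequiv ⟨{i}, hch⟩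
      have hcard1 : ((f ⟨{i}, hch⟩).1).card = 1 := by
        have h := hce.1
        simpa using h.symm
      obtain ⟨p, hp⟩ := Finset.card_eq_one.mp hcard1
      refine ⟨p, fun _ _ => ⟨?_, ?_⟩⟩
      · exact (f ⟨{i}, hch⟩).2.1 (hp ▸ Finset.mem_singleton_self p)
      · have h0 := hce.2 0 (by simp)
        rw [hp] at h0
        simpa using h0.symm
    · exact ⟨0, fun h1 h2 => absurd ⟨h1, h2⟩ hcase⟩
  choose g hg using hgex
  -- card of I_Y is at least t+1
  have hcard : t + 1 ≤ (IUset W S k Y).card := by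
    have hmaps : ∀ j ∈ Finset.range (t+1), g (2*j) ∈ IUset W S k Y := by
      intro j hj
      rw [Finset.mem_range] at hj
      exact (hg (2*j) (by omega) (by omega)).1
    have hinjOn : Set.InjOn (fun j => g (2*j)) (Finset.range (t+1)) := by
      intro j hj j' hj' hgj
      simp only [Finset.coe_range, Set.mem_Iio] at hj hj'
      have e1 := (hg (2*j) (by omega) (by omega)).2
      have e2 := (hg (2*j') (by omega) (by omega)).2
      simp only at hgj
      rw [hgj, e2] at e1
      rw [← List.map_drop, ← List.map_take, ← List.map_drop, ← List.map_take] at e1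
      have e3 := List.map_injective_iff.mpr (Option.some_injective α) e1
      have := uniq_k (2*j') (2*j) (by omega) (by omega) e3
      omega
    have := Finset.card_le_card_of_injOn (fun j => g (2*j)) hmaps hinjOn
    simpa using this
  -- membership in I_Y
  have hIYmem : ∀ p : ℕ, p ∈ IUset W S k Y ↔ p + k ≤ Y.length ∧
      (∀ x ∈ (Y.drop p).take k, x ≠ none) ∧
      ¬ ∃ j ∈ S, ((Y.drop p).take k).reduceOption = (W.drop j).take k := by
    intro p
    simp only [IUset, Finset.mem_filter, Finset.mem_range]
    constructor
    · rintro ⟨h1, h2, h3⟩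
      exact ⟨by omega, h2, h3⟩
    · rintro ⟨h1, h2, h3⟩
      exact ⟨by omega, h2, h3⟩
  -- every all-Σ non-sensitive k-window of Y occurs in W at an even position
  have hocc : ∀ p : ℕ, p + k ≤ Y.length → (∀ x ∈ (Y.drop p).take k, x ≠ none) →
      (¬ ∃ j ∈ S, ((Y.drop p).take k).reduceOption = (W.drop j).take k) →
      ∃ e, e + k ≤ n ∧ e % 2 = 0 ∧ (W.drop e).take k = ((Y.drop p).take k).reduceOption := by
    intro p hlen hsome hns
    have hmap : ((Y.drop p).take k).reduceOption.map some = (Y.drop p).take k :=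
      map_some_reduceOption hsome
    have hAlen : ((Y.drop p).take k).length = k := by
      simp only [List.length_take, List.length_drop]
      omega
    have hPAlen : ((Y.drop p).take k).reduceOption.length = k := by
      have h := congrArg List.length hmap
      rw [List.length_map, hAlen] at h
      exact h
    have hnsens : ∀ j ∈ S, ((Y.drop p).take k).reduceOption ≠ (W.drop j).take k := by
      intro j hj h
      exact hns ⟨j, hj, h⟩
    have hfreq := hP2 ((Y.drop p).take k).reduceOption hPAlen hnsens
    have hposY : 0 < strFreq Y (((Y.drop p).take k).reduceOption.map some) := by
      refine strFreq_pos' (i := p) ?_ ?_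
      · rw [List.length_map, hPAlen]
        omega
      · rw [List.length_map, hPAlen, hmap]
    rw [hfreq] at hposY
    obtain ⟨e, he1, he2⟩ := exists_occ' hposY
    rw [hPAlen] at he1 he2
    rw [hnW] at he1
    have heS : e ∉ S := fun h => hnsens e h he2.symm
    have heS2 : ¬ (e < n - k ∧ e % 2 = 1) := fun h => heS ((hSmem e).mpr h)
    exact ⟨e, he1, by omega, he2⟩
  -- gap property in I_Y
  have hgap : ∀ p ∈ IUset W S k Y, ∀ q ∈ IUset W S k Y, p < q → p + (k+1) ≤ q := by
    intro p hp q hq hpq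
    by_contra hcon
    push_neg at hcon
    rw [hIYmem] at hp hq
    obtain ⟨hp1, hp2, hp3⟩ := hp
    obtain ⟨hq1, hq2, hq3⟩ := hq
    obtain ⟨e, he1, he2, he3⟩ := hocc p hp1 hp2 hp3
    have hlenB : p + 1 + k ≤ Y.length := by omega
    have hBsome : ∀ x ∈ (Y.drop (p+1)).take k, x ≠ none := by
      rw [forall_mem_take_drop]
      rw [forall_mem_take_drop] at hp2 hq2
      intro s h1s h2s hlt
      by_cases hc : s < p + k
      · exact hp2 s (by omega) (by omega) hlt
      · exact hq2 s (by omega) (by omega) hlt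
    by_cases hsens : ∃ j ∈ S, ((Y.drop (p+1)).take k).reduceOption = (W.drop j).take k
    · obtain ⟨j, hj, hjeq⟩ := hsens
      refine hC1 j hj ?_
      rw [← hjeq, map_some_reduceOption hBsome]
      exact ((List.take_prefix _ _).isInfix).trans (List.drop_suffix _ _).isInfix
    · obtain ⟨e', he'1, he'2, he'3⟩ := hocc (p+1) hlenB hBsome hsens
      have hmapA : ((Y.drop p).take k).reduceOption.map some = (Y.drop p).take k :=
        map_some_reduceOption hp2
      have hmapB : ((Y.drop (p+1)).take k).reduceOption.map some = (Y.drop (p+1)).take k :=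
        map_some_reduceOption hBsome
      have keyY : ((Y.drop p).take k).drop 1 = ((Y.drop (p+1)).take k).take (k-1) := by
        rw [List.drop_take, List.drop_drop, List.take_take, min_eq_left (by omega)]
      have keyred : ((Y.drop p).take k).reduceOption.drop 1 =
          ((Y.drop (p+1)).take k).reduceOption.take (k-1) := by
        apply List.map_injective_iff.mpr (Option.some_injective α)
        rw [List.map_drop, List.map_take, hmapA, hmapB]
        exact keyY
      have keyW : (W.drop (e+1)).take (k-1) = (W.drop e').take (k-1) := by
        have l1 : ((W.drop e).take k).drop 1 = (W.drop (e+1)).take (k-1) := by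
          rw [List.drop_take, List.drop_drop]
        have l2 : ((W.drop e').take k).take (k-1) = (W.drop e').take (k-1) := by
          rw [List.take_take, min_eq_left (by omega)]
        rw [← l1, ← l2, he3, he'3, keyred]
      have := uniq_km1 (e+1) e' (by omega) (by omega) keyW
      omega
  -- finish
  have hpos : ∀ e ∈ IUset W S k Y, e + k ≤ Y.length := by
    intro e he
    exact ((hIYmem e).mp he).1
  obtain ⟨e, heIY, hebig⟩ := gap_max (d := k+1) (r := t) (by omega) hcard hgap
  have hYlen : t * (k+1) + k ≤ Y.length := le_trans (by omega) (hpos e heIY)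
  have h1 : (n - k + 2) / 2 = t + 1 := by omega
  have h2 : (n - k + 1) / 2 = t := by omega
  rw [h1, h2]
  have e1 : (t+1) * k = t * k + k := by ring
  have e2 : t * (k+1) = t * k + t := by ring
  omega
end

section
/- Objective-value correspondence in the MCK-to-MCSR reduction: in the setting of the reduction (classes C_1,…,C_δ with distinct letters α_{ij}, string Y with δ occurrences of #, replacement string Z_g for a choice function g), fix real costs c_{ij} ≥ 0, real weights w_{ij}, a real b, and set τ = 2, θ = δ − b, Ghost(μ(i), α_{ij}) = c_{ij} and Sub(μ(i), α_{ij}) = 1 − w_{ij}, where μ(i) is the position of the i-th occurrence of # in Y. Then: (a) the set of positions p with Y[p] = #, Freq_Y(Z_g[p]) < τ and Freq_{Z_g}(Z_g[p]) ≥ τ is exactly the set {μ(1),…,μ(δ)} of all replaced positions, so the total ghost cost Σ over such p of Ghost(p, Z_g[p]) equals Σ_{i=1}^{δ} c_{i,g(i)}; (b) the total substitution weight Σ_{p: Y[p]=#} Sub(p, Z_g[p]) equals δ − Σ_{i=1}^{δ} w_{i,g(i)}; consequently Σ_{p: Y[p]=#} Sub(p, Z_g[p]) ≤ θ if and only if Σ_{i=1}^{δ}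 w_{i,g(i)} ≥ b. -/
/-- The string `Y = α_{11}…α_{1n_1} # α_{21}…α_{2n_2} # … # α_{δ1}…α_{δn_δ} #` of the
MCK-to-MCSR reduction, over `Σ ∪ {#}` modelled as `Option β` (`none` is `#`). -/
def Ystr {β : Type*} {δ : ℕ} {n : Fin δ → ℕ} (a : (i : Fin δ) → Fin (n i) → β) :
    List (Option β) :=
  (List.ofFn (fun i => (List.ofFn fun j => some (a i j)) ++ [none])).flatten

/-- The string `Z_g` obtained from `Y` by replacing, for each `i`, the `i`-th occurrence
of `#` (the one terminating the `i`-th block) with the letter `α_{i,g(i)}`. -/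
def Zstr {β : Type*} {δ : ℕ} {n : Fin δ → ℕ} (a : (i : Fin δ) → Fin (n i) → β)
    (g : (i : Fin δ) → Fin (n i)) : List (Option β) :=
  (List.ofFn (fun i => (List.ofFn fun j => some (a i j)) ++ [some (a i (g i))])).flatten

/-- `μ(i)`: the position of the `i`-th occurrence of `#` in `Y`. -/
def muPos {δ : ℕ} (n : Fin δ → ℕ) (i : Fin δ) : ℕ :=
  (∑ i' ∈ Finset.Iio i, (n i' + 1)) + n i

/-- The set of positions of `#` in `Y`. -/
def hashPos {β : Type*} [DecidableEq β] {δ : ℕ} {n : Fin δ → ℕ}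
    (a : (i : Fin δ) → Fin (n i) → β) : Finset ℕ :=
  (Finset.range (Ystr a).length).filter (fun p => (Ystr a)[p]? = some none)

/- ----------------- auxiliary lemmas ----------------- -/

lemma flat_get {α : Type*} (L : List (List α)) : ∀ (k : ℕ) (hk : k < L.length) (j : ℕ),
    j < L[k].length →
    L.flatten[((L.take k).map List.length).sum + j]? = L[k][j]? := by
  induction L with
  | nil => intro k hk; simp at hk
  | cons l L ih =>
    intro k hk j hj
    match k with
    | 0 =>
      simp only [List.take_zero, List.map_nil, List.sum_nil, Nat.zero_add,
        List.flatten_cons, List.getElem_cons_zero] at *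
      rw [List.getElem?_append_left hj]
    | k+1 =>
      simp only [List.take_succ_cons, List.map_cons, List.sum_cons, List.flatten_cons,
        List.getElem_cons_succ, List.length_cons] at *
      rw [Nat.add_assoc, List.getElem?_append_right (Nat.le_add_right _ _),
        Nat.add_sub_cancel_left]
      exact ih k (by have hLL : (l::L).length = L.length + 1 := rfl; omega) j hj

lemma flat_decomp {α : Type*} (L : List (List α)) : ∀ p, p < L.flatten.length →
    ∃ k, ∃ hk : k < L.length, ∃ j, j < L[k].length ∧
      p = ((L.take k).map List.length).sum + j := by
  induction L with
  | nil => simp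
  | cons l L ih =>
    intro p hp
    by_cases h : p < l.length
    · exact ⟨0, by simp, p, by simpa using h, by simp⟩
    · push_neg at h
      have hp' : p - l.length < L.flatten.length := by
        simp only [List.flatten_cons, List.length_append] at hp; omega
      obtain ⟨k, hk, j, hj, hpe⟩ := ih (p - l.length) hp'
      refine ⟨k+1, by simpa using Nat.succ_lt_succ hk, j, by simpa using hj, ?_⟩
      simp only [List.take_succ_cons, List.map_cons, List.sum_cons]
      omega

lemma sum_take_ofFn {δ : ℕ} (f : Fin δ → ℕ) : ∀ (k : ℕ), k ≤ δ →
    ((List.ofFn f).take k).sum = ∑ i : Fin δ, if i.val < k then f i else 0 := by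
  intro k
  induction k with
  | zero => simp
  | succ k ih =>
    intro hk
    rw [List.sum_take_succ _ _ (by simp; omega), ih (by omega), List.getElem_ofFn]
    have he : ∀ i : Fin δ, (if i.val < k+1 then f i else 0)
        = (if i.val < k then f i else 0) + (if i = ⟨k, by omega⟩ then f i else 0) := by
      intro i
      split_ifs <;> simp_all [Fin.ext_iff] <;> omega
    rw [Finset.sum_congr rfl fun i _ => he i, Finset.sum_add_distrib,
      Finset.sum_ite_eq' Finset.univ]
    simp

lemma sum_Iio_fin {δ : ℕ} (f : Fin δ → ℕ) (i : Fin δ) :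
    ∑ i' ∈ Finset.Iio i, f i' = ∑ i' : Fin δ, if i'.val < i.val then f i' else 0 := by
  rw [← Finset.sum_filter]
  congr 1
  ext x
  simp only [Finset.mem_Iio, Finset.mem_filter, Finset.mem_univ, true_and, Fin.lt_def]

lemma pre_sum {α : Type*} {δ : ℕ} {n : Fin δ → ℕ} (B : Fin δ → List α)
    (hB : ∀ i, (B i).length = n i + 1) (k : Fin δ) :
    (((List.ofFn B).take k.val).map List.length).sum = ∑ i' ∈ Finset.Iio k, (n i' + 1) := by
  rw [List.map_take, List.map_ofFn]
  have hfe : (List.length ∘ B) = fun i => n i + 1 := funext hB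
  rw [hfe, sum_take_ofFn (fun i => n i + 1) k.val (le_of_lt k.isLt)]
  exact (sum_Iio_fin (fun i => n i + 1) k).symm

lemma get_block {α : Type*} {δ : ℕ} {n : Fin δ → ℕ} (B : Fin δ → List α)
    (hB : ∀ i, (B i).length = n i + 1) (k : Fin δ) (j : ℕ) (hj : j < n k + 1) :
    (List.ofFn B).flatten[(∑ i' ∈ Finset.Iio k, (n i' + 1)) + j]? = (B k)[j]? := by
  have hk : k.val < (List.ofFn B).length := by simp
  have h := flat_get (List.ofFn B) k.val hk j (by
    rw [List.getElem_ofFn]; simp only [Fin.eta, hB]; exact hj)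
  rw [List.getElem_ofFn] at h
  simp only [Fin.eta] at h
  rwa [pre_sum B hB k] at h

lemma count_one_of_nodup {α : Type*} [BEq α] [LawfulBEq α] {l : List α} {x : α}
    (hn : l.Nodup) (hm : x ∈ l) : l.count x = 1 := by
  induction l with
  | nil => simp at hm
  | cons y l ih =>
    rw [List.nodup_cons] at hn
    rcases List.mem_cons.mp hm with rfl | hm'
    · rw [List.count_cons_self, List.count_eq_zero_of_not_mem hn.1]
    · have hne : x ≠ y := fun h => hn.1 (h ▸ hm')
      rw [List.count_cons_of_ne hne.symm, ih hn.2 hm']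

/-- objective-value correspondence in the MCK-to-MCSR reduction: with
`τ = 2`, `θ = δ − b`, `Ghost(μ(i), α_{ij}) = c_{ij}` and `Sub(μ(i), α_{ij}) = 1 − w_{ij}`,
(a) the set of positions `p` with `Y[p] = #`, `Freq_Y(Z_g[p]) < τ` and
`Freq_{Z_g}(Z_g[p]) ≥ τ` is exactly the set `{μ(1),…,μ(δ)}` of all replaced positions,
and the total ghost cost equals `Σ_i c_{i,g(i)}`;
(b) the total substitution weight equals `δ − Σ_i w_{i,g(i)}`; consequently it is `≤ θ`
iff `Σ_i w_{i,g(i)} ≥ b`. -/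
theorem stmt11 {β : Type*} [DecidableEq β] (δ : ℕ) (hδ : 1 ≤ δ)
    (n : Fin δ → ℕ) (hn : ∀ i, 1 ≤ n i)
    (a : (i : Fin δ) → Fin (n i) → β)
    (ha : Function.Injective fun p : Σ i : Fin δ, Fin (n i) => a p.1 p.2)
    (g : (i : Fin δ) → Fin (n i))
    (c : (i : Fin δ) → Fin (n i) → ℝ) (hc : ∀ i j, 0 ≤ c i j)
    (w : (i : Fin δ) → Fin (n i) → ℝ) (b : ℝ)
    (Ghost Sub : ℕ → Option β → ℝ)
    (hGhost : ∀ i j, Ghost (muPos n i) (some (a i j)) = c i j)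
    (hSub : ∀ i j, Sub (muPos n i) (some (a i j)) = 1 - w i j) :
    -- (a): the ghost set is all of the replaced positions …
    ((hashPos a).filter (fun p =>
        (Ystr a).count ((Zstr a g).getD p none) < 2 ∧
        2 ≤ (Zstr a g).count ((Zstr a g).getD p none)) = hashPos a) ∧
    hashPos a = Finset.image (muPos n) Finset.univ ∧
    -- … and the total ghost cost is `Σ_i c_{i,g(i)}`
    (∑ p ∈ (hashPos a).filter (fun p =>
        (Ystr a).count ((Zstr a g).getD p none) < 2 ∧
        2 ≤ (Zstr a g).count ((Zstr a g).getD p none)),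
      Ghost p ((Zstr a g).getD p none)) = ∑ i, c i (g i) ∧
    -- (b): the total substitution weight
    (∑ p ∈ hashPos a, Sub p ((Zstr a g).getD p none)) = (δ : ℝ) - ∑ i, w i (g i) ∧
    ((∑ p ∈ hashPos a, Sub p ((Zstr a g).getD p none)) ≤ (δ : ℝ) - b ↔
      b ≤ ∑ i, w i (g i)) := by
  classical
  set BY : Fin δ → List (Option β) :=
    fun i => (List.ofFn fun j => some (a i j)) ++ [none] with hBY
  set BZ : Fin δ → List (Option β) :=
    fun i => (List.ofFn fun j => some (a i j)) ++ [some (a i (g i))] with hBZ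
  have hBYlen : ∀ i, (BY i).length = n i + 1 := by intro i; simp [hBY]
  have hBZlen : ∀ i, (BZ i).length = n i + 1 := by intro i; simp [hBZ]
  have hYdef : Ystr a = (List.ofFn BY).flatten := rfl
  have hZdef : Zstr a g = (List.ofFn BZ).flatten := rfl
  -- length of Y
  have hYlen : (Ystr a).length = ∑ i, (n i + 1) := by
    rw [hYdef, List.length_flatten, List.map_ofFn, List.sum_ofFn]
    exact Finset.sum_congr rfl fun i _ => by simp [hBY]
  -- value of Y at hash positions
  have hYmu : ∀ i : Fin δ, (Ystr a)[muPos n i]? = some none := by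
    intro i
    rw [hYdef, muPos, get_block BY hBYlen i (n i) (Nat.lt_succ_self _), hBY]
    rw [List.getElem?_append_right (by simp)]
    simp
  -- value of Y at letter positions
  have hYlt : ∀ (i : Fin δ) (j : ℕ) (hj : j < n i),
      (Ystr a)[(∑ i' ∈ Finset.Iio i, (n i' + 1)) + j]? = some (some (a i ⟨j, hj⟩)) := by
    intro i j hj
    rw [hYdef, get_block BY hBYlen i j (by omega), hBY,
      List.getElem?_append_left (by simpa using hj)]
    simp [List.getElem?_ofFn, List.ofFnNthVal, hj]
  -- value of Z at hash positions
  have hZmu : ∀ i : Fin δ, (Zstr a g)[muPos n i]? = some (some (a i (g i))) := by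
    intro i
    rw [hZdef, muPos, get_block BZ hBZlen i (n i) (Nat.lt_succ_self _), hBZ]
    rw [List.getElem?_append_right (by simp)]
    simp
  have hZgetD : ∀ i : Fin δ, (Zstr a g).getD (muPos n i) none = some (a i (g i)) := by
    intro i
    rw [List.getD_eq_getElem?_getD, hZmu i]
    rfl
  -- muPos bounds
  have hIic : ∀ i : Fin δ, muPos n i + 1 = ∑ i' ∈ Finset.Iic i, (n i' + 1) := by
    intro i
    rw [← Finset.Iio_insert, Finset.sum_insert (by simp), muPos]
    omega
  have hmu_lt : ∀ i : Fin δ, muPos n i < (Ystr a).length := by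
    intro i
    rw [hYlen]
    have h1 := hIic i
    have h2 : ∑ i' ∈ Finset.Iic i, (n i' + 1) ≤ ∑ i', (n i' + 1) :=
      Finset.sum_le_sum_of_subset (Finset.subset_univ _)
    omega
  have hmu_inj : Function.Injective (muPos n) := by
    have : StrictMono (muPos n) := by
      intro i i' h
      have hsub : Finset.Iic i ⊆ Finset.Iio i' := fun x hx => by
        simp only [Finset.mem_Iic] at hx
        simp only [Finset.mem_Iio]
        exact lt_of_le_of_lt hx h
      have h2 : ∑ i'' ∈ Finset.Iic i, (n i'' + 1) ≤ ∑ i'' ∈ Finset.Iio i', (n i'' + 1) :=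
        Finset.sum_le_sum_of_subset hsub
      have h1 := hIic i
      rw [muPos, muPos] at *
      omega
    exact this.injective
  -- every hash position is some muPos
  have hash_char : ∀ p ∈ hashPos a, ∃ i : Fin δ, p = muPos n i := by
    intro p hp
    rw [hashPos, Finset.mem_filter, Finset.mem_range] at hp
    obtain ⟨hplen, hpval⟩ := hp
    rw [hYdef] at hplen hpval
    obtain ⟨k, hk, j, hj, hpe⟩ := flat_decomp (List.ofFn BY) p hplen
    have hkδ : k < δ := by simpa using hk
    set i : Fin δ := ⟨k, hkδ⟩ with hi
    have hLk : (List.ofFn BY)[k] = BY i := by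
      rw [List.getElem_ofFn]
    rw [hLk, hBYlen] at hj
    have hpe' : p = (∑ i' ∈ Finset.Iio i, (n i' + 1)) + j := by
      rw [hpe]; congr 1
      calc (((List.ofFn BY).take k).map List.length).sum
          = (((List.ofFn BY).take (i : ℕ)).map List.length).sum := rfl
        _ = ∑ i' ∈ Finset.Iio i, (n i' + 1) := pre_sum BY hBYlen i
    by_cases hjn : j < n i
    · exfalso
      have := hYlt i j hjn
      rw [hYdef, ← hpe'] at this
      rw [this] at hpval
      simp at hpval
    · have hjeq : j = n i := by omega
      exact ⟨i, by rw [hpe', hjeq, muPos]⟩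
  have himg : hashPos a = Finset.image (muPos n) Finset.univ := by
    ext p
    simp only [Finset.mem_image, Finset.mem_univ, true_and]
    constructor
    · intro hp
      obtain ⟨i, hi⟩ := hash_char p hp
      exact ⟨i, hi.symm⟩
    · rintro ⟨i, rfl⟩
      rw [hashPos, Finset.mem_filter, Finset.mem_range]
      exact ⟨hmu_lt i, hYmu i⟩
  -- injectivity of letters
  have hsig : ∀ (i i' : Fin δ) (j : Fin (n i)) (j' : Fin (n i')),
      a i j = a i' j' → i = i' := by
    intro i i' j j' h
    have h2 := @ha ⟨i, j⟩ ⟨i', j'⟩ h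
    exact congrArg Sigma.fst h2
  have hainj : ∀ i : Fin δ, Function.Injective fun j : Fin (n i) => (some (a i j) : Option β) := by
    intro i x y h
    simp only [Option.some.injEq] at h
    have h2 := @ha ⟨i, x⟩ ⟨i, y⟩ h
    simpa using h2
  -- counts in Y
  have hcY : ∀ (i : Fin δ) (j : Fin (n i)), (Ystr a).count (some (a i j)) = 1 := by
    intro i j
    rw [hYdef, List.count_flatten, List.map_ofFn, List.sum_ofFn]
    have hblock : ∀ i' : Fin δ, (BY i').count (some (a i j)) = if i' = i then 1 else 0 := by
      intro i'
      rw [hBY]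
      simp only
      rw [List.count_append]
      have h0 : List.count (some (a i j)) [(none : Option β)] = 0 := by simp
      rw [h0, Nat.add_zero]
      by_cases hii : i' = i
      · subst hii
        rw [if_pos rfl]
        exact count_one_of_nodup (List.nodup_ofFn.mpr (hainj i'))
          (by rw [List.mem_ofFn]; exact ⟨j, rfl⟩)
      · rw [if_neg hii, List.count_eq_zero]
        intro hmem
        rw [List.mem_ofFn] at hmem
        obtain ⟨j', hj'⟩ := hmem
        simp only [Option.some.injEq] at hj'
        exact hii (hsig i' i j' j hj')
    calc ∑ i', ((fun l => List.count (some (a i j)) l) ∘ BY) i'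
        = ∑ i' : Fin δ, if i' = i then 1 else 0 :=
          Finset.sum_congr rfl fun i' _ => hblock i'
      _ = 1 := by rw [Finset.sum_ite_eq' Finset.univ]; simp
  -- counts in Z
  have hcZ : ∀ i : Fin δ, (Zstr a g).count (some (a i (g i))) = 2 := by
    intro i
    rw [hZdef, List.count_flatten, List.map_ofFn, List.sum_ofFn]
    have hblock : ∀ i' : Fin δ, (BZ i').count (some (a i (g i))) = if i' = i then 2 else 0 := by
      intro i'
      rw [hBZ]
      simp only
      rw [List.count_append]
      have h1 : List.count (some (a i (g i))) (List.ofFn fun j => (some (a i' j) : Option β))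
          = if i' = i then 1 else 0 := by
        by_cases hii : i' = i
        · subst hii
          rw [if_pos rfl]
          exact count_one_of_nodup (List.nodup_ofFn.mpr (hainj i'))
            (by rw [List.mem_ofFn]; exact ⟨g i', rfl⟩)
        · rw [if_neg hii, List.count_eq_zero]
          intro hmem
          rw [List.mem_ofFn] at hmem
          obtain ⟨j', hj'⟩ := hmem
          simp only [Option.some.injEq] at hj'
          exact hii (hsig i' i j' (g i) hj')
      have h2 : List.count (some (a i (g i))) [(some (a i' (g i')) : Option β)]
          = if i' = i then 1 else 0 := by
        by_cases hii : i' = i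
        · subst hii
          rw [if_pos rfl]
          exact count_one_of_nodup (List.nodup_singleton _) (List.mem_singleton_self _)
        · rw [if_neg hii]
          apply List.count_eq_zero_of_not_mem
          intro hmem
          rw [List.mem_singleton] at hmem
          simp only [Option.some.injEq] at hmem
          exact hii ((hsig i i' (g i) (g i') hmem).symm)
      rw [h1, h2]
      split_ifs <;> omega
    calc ∑ i', ((fun l => List.count (some (a i (g i))) l) ∘ BZ) i'
        = ∑ i' : Fin δ, if i' = i then 2 else 0 :=
          Finset.sum_congr rfl fun i' _ => hblock i'
      _ = 2 := by rw [Finset.sum_ite_eq' Finset.univ]; simp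
  -- the ghost filter keeps everything
  have hfilter : (hashPos a).filter (fun p =>
      (Ystr a).count ((Zstr a g).getD p none) < 2 ∧
      2 ≤ (Zstr a g).count ((Zstr a g).getD p none)) = hashPos a := by
    apply Finset.filter_true_of_mem
    intro p hp
    obtain ⟨i, rfl⟩ := hash_char p hp
    rw [hZgetD i, hcY i (g i), hcZ i]
    exact ⟨by omega, le_refl _⟩
  refine ⟨hfilter, himg, ?_, ?_, ?_⟩
  · rw [hfilter, himg, Finset.sum_image (fun i _ i' _ h => hmu_inj h)]
    exact Finset.sum_congr rfl fun i _ => by rw [hZgetD i, hGhost i (g i)]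
  · rw [himg, Finset.sum_image (fun i _ i' _ h => hmu_inj h)]
    have : ∀ i : Fin δ, Sub (muPos n i) ((Zstr a g).getD (muPos n i) none) = 1 - w i (g i) := by
      intro i; rw [hZgetD i, hSub i (g i)]
    rw [Finset.sum_congr rfl fun i _ => this i, Finset.sum_sub_distrib]
    simp
  · have heq : (∑ p ∈ hashPos a, Sub p ((Zstr a g).getD p none))
        = (δ : ℝ) - ∑ i, w i (g i) := by
      rw [himg, Finset.sum_image (fun i _ i' _ h => hmu_inj h)]
      have : ∀ i : Fin δ, Sub (muPos n i) ((Zstr a g).getD (muPos n i) none) = 1 - w i (g i) := by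
        intro i; rw [hZgetD i, hSub i (g i)]
      rw [Finset.sum_congr rfl fun i _ => this i, Finset.sum_sub_distrib]
      simp
    rw [heq]
    constructor <;> intro h <;> linarith
end

section
/- Optimal-solution correspondence in the MCK-to-MCSR reduction: in the setting of the reduction with costs c_{ij} ≥ 0, weights w_{ij}, threshold b, τ = 2 and θ = δ − b, call a choice function g MCK-feasible if Σ_{i=1}^{δ} w_{i,g(i)} ≥ b, and call the replacement string Z_g MCSR-feasible if Σ_{p: Y[p]=#} Sub(p, Z_g[p]) ≤ θ. Then g is MCK-feasible and minimizes Σ_{i=1}^{δ} c_{i,g(i)} over all MCK-feasible choice functions if and only if Z_g is MCSR-feasible and minimizes the total ghost cost Σ_{p: Y[p]=#, Freq_Y(Z[p])<τ≤Freq_Z(Z[p])} Ghost(p, Z[p]) over all MCSR-feasible replacement strings Z = Z_h with h a choice function. -/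
lemma sum_Iio_succ {M} [AddCommMonoid M] {m : ℕ} (i : Fin m) (f : Fin (m+1) → M) :
    ∑ x ∈ Finset.Iio i.succ, f x = f 0 + ∑ x ∈ Finset.Iio i, f x.succ := by
  have : Finset.Iio i.succ
      = insert 0 ((Finset.Iio i).map ⟨Fin.succ, Fin.succ_injective _⟩) := by
    ext x
    cases x using Fin.cases with
    | zero => simp [Fin.succ_pos]
    | succ x => simp [Fin.succ_lt_succ_iff, (Fin.succ_ne_zero x)]
  rw [this, Finset.sum_insert (by simp [Fin.succ_ne_zero]), Finset.sum_map]
  rfl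

lemma count_ofFn {γ} [BEq γ] [LawfulBEq γ] : ∀ {m : ℕ} (f : Fin m → γ) (x : γ),
    (List.ofFn f).count x = ∑ j, if f j == x then 1 else 0
  | 0, f, x => by simp
  | m+1, f, x => by
    rw [List.ofFn_succ, List.count_cons, Fin.sum_univ_succ,
      count_ofFn (fun j => f j.succ) x, Nat.add_comm]

lemma flatten_ofFn_getElem? {γ : Type*} : ∀ {m : ℕ} (B : Fin m → List γ) (i : Fin m) (k : ℕ),
    k < (B i).length →
    ((List.ofFn B).flatten)[(∑ i' ∈ Finset.Iio i, (B i').length) + k]? = (B i)[k]?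
  | 0, B, i, k, hk => i.elim0
  | m+1, B, i, k, hk => by
    rw [List.ofFn_succ, List.flatten_cons]
    cases i using Fin.cases with
    | zero =>
      rw [show Finset.Iio (0 : Fin (m+1)) = ∅ from by ext x; simp, Finset.sum_empty, Nat.zero_add]
      exact List.getElem?_append_left hk
    | succ i =>
      rw [sum_Iio_succ]
      rw [Nat.add_assoc, List.getElem?_append_right (by omega), Nat.add_sub_cancel_left]
      exact flatten_ofFn_getElem? (fun i' => B i'.succ) i k hk

lemma flatten_ofFn_pos {γ : Type*} : ∀ {m : ℕ} (B : Fin m → List γ) (p : ℕ),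
    p < ((List.ofFn B).flatten).length →
    ∃ i k, k < (B i).length ∧ p = (∑ i' ∈ Finset.Iio i, (B i').length) + k
  | 0, B, p, hp => by simp at hp
  | m+1, B, p, hp => by
    rw [List.ofFn_succ, List.flatten_cons, List.length_append] at hp
    by_cases h0 : p < (B 0).length
    · exact ⟨0, p, h0, by simp⟩
    · obtain ⟨i, k, hk, hp'⟩ := flatten_ofFn_pos (fun i' => B i'.succ) (p - (B 0).length)
        (by omega)
      exact ⟨i.succ, k, hk, by rw [sum_Iio_succ]; omega⟩

section

set_option linter.unusedSectionVars false
variable {β : Type*} [DecidableEq β] {δ : ℕ} {n : Fin δ → ℕ}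
  (a : (i : Fin δ) → Fin (n i) → β) (e : Fin δ → Option β)

/-- generic block string -/
def Wstr : List (Option β) :=
  (List.ofFn (fun i => (List.ofFn fun j => some (a i j)) ++ [e i])).flatten

lemma Ystr_eq : Ystr a = Wstr a (fun _ => none) := rfl

lemma Zstr_eq (g : (i : Fin δ) → Fin (n i)) :
    Zstr a g = Wstr a (fun i => some (a i (g i))) := rfl

lemma length_Wstr : (Wstr a e).length = ∑ i, (n i + 1) := by
  simp [Wstr, List.length_flatten, List.map_ofFn, List.sum_ofFn, Function.comp]

lemma getElem?_Wstr (i : Fin δ) : (Wstr a e)[muPos n i]? = some (e i) := by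
  have h := flatten_ofFn_getElem?
    (fun i => (List.ofFn fun j => some (a i j)) ++ [e i]) i (n i) (by simp)
  simp only [List.length_append, List.length_ofFn, List.length_singleton] at h
  rw [Wstr, show muPos n i = (∑ i' ∈ Finset.Iio i, (n i' + 1)) + n i from rfl, h,
    List.getElem?_append_right (by simp), List.length_ofFn]
  simp

lemma count_Wstr (x : Option β) :
    (Wstr a e).count x =
      (∑ i, ∑ j, if some (a i j) = x then 1 else 0) +
      ∑ i, (if e i = x then 1 else 0) := by
  rw [Wstr, List.count_flatten, List.map_ofFn, List.sum_ofFn, ← Finset.sum_add_distrib]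
  refine Finset.sum_congr rfl fun i _ => ?_
  show List.count x _ = _
  rw [List.count_append, count_ofFn (fun j => some (a i j)) x]
  congr 1
  · simp
  · by_cases hx : e i = x <;> simp [hx, Ne.symm, List.count_cons]

lemma mem_hashPos (p : ℕ) : p ∈ hashPos a ↔ ∃ i, p = muPos n i := by
  constructor
  · rintro hp
    simp only [hashPos, Finset.mem_filter, Finset.mem_range] at hp
    obtain ⟨hlt, hval⟩ := hp
    obtain ⟨i, k, hk, rfl⟩ := flatten_ofFn_pos _ p hlt
    refine ⟨i, ?_⟩
    rw [Ystr] at hval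
    rw [flatten_ofFn_getElem? _ i k hk] at hval
    simp only [List.length_append, List.length_ofFn, List.length_singleton] at hk
    rcases Nat.lt_or_ge k (n i) with h | h
    · rw [List.getElem?_append_left (by simpa using h)] at hval
      simp [List.getElem?_ofFn, List.ofFnNthVal, h] at hval
    · have hk' : k = n i := by omega
      subst hk'
      simp only [muPos]
      congr 1
      refine Finset.sum_congr rfl fun i' _ => ?_
      simp
  · rintro ⟨i, rfl⟩
    simp only [hashPos, Finset.mem_filter, Finset.mem_range]
    constructor
    · rw [Ystr_eq, length_Wstr]
      have h1 : muPos n i + 1 = ∑ i' ∈ Finset.Iic i, (n i' + 1) := by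
        rw [muPos, ← Finset.Iio_insert, Finset.sum_insert (by simp)]
        ring
      have h2 : (∑ i' ∈ Finset.Iic i, (n i' + 1)) ≤ ∑ i', (n i' + 1) :=
        Finset.sum_le_sum_of_subset (Finset.subset_univ _)
      omega
    · rw [Ystr_eq, getElem?_Wstr]

end

section
set_option linter.unusedSectionVars false
variable {β : Type*} [DecidableEq β] {δ : ℕ} {n : Fin δ → ℕ}
  {a : (i : Fin δ) → Fin (n i) → β}
  (ha : Function.Injective fun p : Σ i : Fin δ, Fin (n i) => a p.1 p.2)

include ha in
lemma key_sum (i : Fin δ) (j : Fin (n i)) :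
    (∑ i', ∑ j', if some (a i' j') = some (a i j) then 1 else 0) = 1 := by
  have hinj : ∀ p q : Σ i : Fin δ, Fin (n i), a p.1 p.2 = a q.1 q.2 ↔ p = q :=
    fun p q => ha.eq_iff
  have h2 : (∑ i', ∑ j', if some (a i' j') = some (a i j) then (1 : ℕ) else 0)
      = ∑ i', ∑ j', if (⟨i', j'⟩ : Σ i' : Fin δ, Fin (n i')) = ⟨i, j⟩ then 1 else 0 :=
    Finset.sum_congr rfl fun i' _ => Finset.sum_congr rfl fun j' _ =>
      if_congr (by rw [Option.some.injEq]; exact hinj ⟨i', j'⟩ ⟨i, j⟩) rfl rfl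
  rw [h2, ← Finset.sum_sigma (f := fun x : Σ i' : Fin δ, Fin (n i') =>
      if x = (⟨i, j⟩ : Σ i' : Fin δ, Fin (n i')) then (1 : ℕ) else 0),
    Finset.univ_sigma_univ]
  simp [Finset.sum_ite_eq']

include ha in
lemma count_Ystr (i : Fin δ) (j : Fin (n i)) :
    (Ystr a).count (some (a i j)) = 1 := by
  rw [Ystr_eq, count_Wstr, key_sum ha]
  simp

include ha in
lemma count_Zstr (h : (i : Fin δ) → Fin (n i)) (i : Fin δ) :
    (Zstr a h).count (some (a i (h i))) = 2 := by
  rw [Zstr_eq, count_Wstr, key_sum ha]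
  have : (∑ i', if some (a i' (h i')) = some (a i (h i)) then 1 else 0) = 1 := by
    have hcond : ∀ i' : Fin δ, (some (a i' (h i')) = some (a i (h i))) ↔ i' = i := by
      intro i'
      rw [Option.some.injEq]
      constructor
      · intro hh
        have := ha (a₁ := ⟨i', h i'⟩) (a₂ := ⟨i, h i⟩) hh
        exact congrArg Sigma.fst this
      · rintro rfl; rfl
    simp only [hcond]
    simp [Finset.sum_ite_eq']
  rw [this]

lemma muPos_strictMono : StrictMono (muPos n) := by
  intro i j hij
  have h1 : muPos n i < ∑ i' ∈ Finset.Iic i, (n i' + 1) := by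
    rw [muPos, ← Finset.Iio_insert, Finset.sum_insert (by simp)]
    omega
  have h2 : Finset.Iic i ⊆ Finset.Iio j := fun x hx => by
    simp only [Finset.mem_Iic] at hx
    simp only [Finset.mem_Iio]
    exact lt_of_le_of_lt hx hij
  have h3 : (∑ i' ∈ Finset.Iic i, (n i' + 1)) ≤ ∑ i' ∈ Finset.Iio j, (n i' + 1) :=
    Finset.sum_le_sum_of_subset h2
  have h4 : (∑ i' ∈ Finset.Iio j, (n i' + 1)) ≤ muPos n j := Nat.le_add_right _ _
  omega

lemma hashPos_eq_image : hashPos a = Finset.image (muPos n) Finset.univ := by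
  ext p
  simp [mem_hashPos, eq_comm]

end


/-- optimal-solution correspondence in the MCK-to-MCSR reduction: with
`τ = 2`, `θ = δ − b`, `Ghost(μ(i), α_{ij}) = c_{ij}` and `Sub(μ(i), α_{ij}) = 1 − w_{ij}`,
a choice function `g` is MCK-feasible (`Σ_i w_{i,g(i)} ≥ b`) and minimizes
`Σ_i c_{i,g(i)}` over all MCK-feasible choice functions if and only if `Z_g` is
MCSR-feasible (total substitution weight `≤ θ`) and minimizes the total ghost cost over
all MCSR-feasible replacement strings `Z_h`. -/
theorem stmt12 {β : Type*} [DecidableEq β] (δ : ℕ) (hδ : 1 ≤ δ)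
    (n : Fin δ → ℕ) (hn : ∀ i, 1 ≤ n i)
    (a : (i : Fin δ) → Fin (n i) → β)
    (ha : Function.Injective fun p : Σ i : Fin δ, Fin (n i) => a p.1 p.2)
    (g : (i : Fin δ) → Fin (n i))
    (c : (i : Fin δ) → Fin (n i) → ℝ) (hc : ∀ i j, 0 ≤ c i j)
    (w : (i : Fin δ) → Fin (n i) → ℝ) (b : ℝ)
    (Ghost Sub : ℕ → Option β → ℝ)
    (hGhost : ∀ i j, Ghost (muPos n i) (some (a i j)) = c i j)
    (hSub : ∀ i j, Sub (muPos n i) (some (a i j)) = 1 - w i j) :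
    ((b ≤ ∑ i, w i (g i)) ∧
      (∀ h : (i : Fin δ) → Fin (n i), b ≤ ∑ i, w i (h i) →
        (∑ i, c i (g i)) ≤ ∑ i, c i (h i)))
    ↔
    ((∑ p ∈ hashPos a, Sub p ((Zstr a g).getD p none)) ≤ (δ : ℝ) - b ∧
      (∀ h : (i : Fin δ) → Fin (n i),
        (∑ p ∈ hashPos a, Sub p ((Zstr a h).getD p none)) ≤ (δ : ℝ) - b →
        (∑ p ∈ (hashPos a).filter (fun p =>
            (Ystr a).count ((Zstr a g).getD p none) < 2 ∧
            2 ≤ (Zstr a g).count ((Zstr a g).getD p none)),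
          Ghost p ((Zstr a g).getD p none)) ≤
        (∑ p ∈ (hashPos a).filter (fun p =>
            (Ystr a).count ((Zstr a h).getD p none) < 2 ∧
            2 ≤ (Zstr a h).count ((Zstr a h).getD p none)),
          Ghost p ((Zstr a h).getD p none)))) := by
  
  have hZ : ∀ (h : (i : Fin δ) → Fin (n i)) (i : Fin δ),
      (Zstr a h).getD (muPos n i) none = some (a i (h i)) := by
    intro h i
    rw [List.getD_eq_getElem?_getD, Zstr_eq, getElem?_Wstr]
    rfl
  have hsum : ∀ (F : ℕ → Option β → ℝ) (h : (i : Fin δ) → Fin (n i)),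
      (∑ p ∈ hashPos a, F p ((Zstr a h).getD p none))
        = ∑ i, F (muPos n i) (some (a i (h i))) := by
    intro F h
    rw [hashPos_eq_image, Finset.sum_image (fun x _ y _ hxy => muPos_strictMono.injective hxy)]
    exact Finset.sum_congr rfl fun i _ => by rw [hZ]
  have hSubSum : ∀ h : (i : Fin δ) → Fin (n i),
      (∑ p ∈ hashPos a, Sub p ((Zstr a h).getD p none)) = (δ : ℝ) - ∑ i, w i (h i) := by
    intro h
    rw [hsum]
    simp only [hSub]
    rw [Finset.sum_sub_distrib]
    simp
  have hfil : ∀ h : (i : Fin δ) → Fin (n i),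
      (hashPos a).filter (fun p =>
            (Ystr a).count ((Zstr a h).getD p none) < 2 ∧
            2 ≤ (Zstr a h).count ((Zstr a h).getD p none)) = hashPos a := by
    intro h
    refine Finset.filter_true_of_mem fun p hp => ?_
    obtain ⟨i, rfl⟩ := (mem_hashPos a p).1 hp
    rw [hZ, count_Ystr ha, count_Zstr ha]
    omega
  have hGhostSum : ∀ h : (i : Fin δ) → Fin (n i),
      (∑ p ∈ hashPos a, Ghost p ((Zstr a h).getD p none)) = ∑ i, c i (h i) := by
    intro h
    rw [hsum]
    simp only [hGhost]
  simp only [hfil, hSubSum, hGhostSum]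
  constructor
  · rintro ⟨h1, h2⟩
    exact ⟨by linarith, fun h hh => h2 h (by linarith)⟩
  · rintro ⟨h1, h2⟩
    exact ⟨by linarith, fun h hh => h2 h (by linarith)⟩
end
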